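/- arXiv:math/0503599 — 6 statements merged into one kernel-verified Lean document; each statement's English description precedes it below -/
import Mathlib

section
/- Let a ≥ 0 and 0 < p < 2 + a. There exists a constant c = c(a,p) such that for every y₁ on the unit circle ∂D₀ and every R ∈ (0, 3], ∫_{D₀ ∩ B(y₁,R)} (1 − |x|)^{a+p} · |x − y₁|^{−2p} dx ≤ c·R^{2+a−p}. -/
open MeasureTheory

private lemma finKey (q : ℝ) (hq : (-2 : ℝ) < q) :
    ∫⁻ x in Metric.ball (0 : ℂ) 1, ENNReal.ofReal (‖x‖ ^ q) < ⊤ := by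
  rcases le_or_gt 0 q with hq0 | hq0
  · calc ∫⁻ x in Metric.ball (0 : ℂ) 1, ENNReal.ofReal (‖x‖ ^ q)
        ≤ ∫⁻ _ in Metric.ball (0 : ℂ) 1, 1 := by
          refine setLIntegral_mono' measurableSet_ball fun x hx => ?_
          have hx1 : ‖x‖ < 1 := mem_ball_zero_iff.1 hx
          have : ‖x‖ ^ q ≤ 1 := Real.rpow_le_one (norm_nonneg _) hx1.le hq0
          calc ENNReal.ofReal (‖x‖ ^ q) ≤ ENNReal.ofReal 1 := ENNReal.ofReal_le_ofReal this
            _ = 1 := ENNReal.ofReal_one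
      _ = volume (Metric.ball (0 : ℂ) 1) := by simp
      _ < ⊤ := measure_ball_lt_top
  · have hqne : q ≠ 0 := hq0.ne
    have hmble : AEMeasurable (fun x : ℂ => ‖x‖ ^ q)
        ((volume : Measure ℂ).restrict (Metric.ball (0 : ℂ) 1)) := by
      exact (Measurable.aemeasurable (by fun_prop))
    rw [lintegral_eq_lintegral_meas_le _
      (Filter.Eventually.of_forall fun x => Real.rpow_nonneg (norm_nonneg x) q) hmble]
    set B := volume (Metric.ball (0 : ℂ) 1) with hBdef
    have hB : B ≠ ⊤ := measure_ball_lt_top.ne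
    have hexp : q⁻¹ * 2 < -1 := by
      rw [inv_mul_eq_div, div_lt_iff_of_neg hq0]
      linarith
    calc ∫⁻ t in Set.Ioi (0:ℝ),
          ((volume : Measure ℂ).restrict (Metric.ball (0 : ℂ) 1)) {a | t ≤ ‖a‖ ^ q}
        ≤ ∫⁻ t in Set.Ioc (0:ℝ) 1 ∪ Set.Ioi 1,
            ((volume : Measure ℂ).restrict (Metric.ball (0 : ℂ) 1)) {a | t ≤ ‖a‖ ^ q} :=
          lintegral_mono_set Set.Ioi_subset_Ioc_union_Ioi
      _ ≤ (∫⁻ t in Set.Ioc (0:ℝ) 1,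
            ((volume : Measure ℂ).restrict (Metric.ball (0 : ℂ) 1)) {a | t ≤ ‖a‖ ^ q})
          + ∫⁻ t in Set.Ioi (1:ℝ),
            ((volume : Measure ℂ).restrict (Metric.ball (0 : ℂ) 1)) {a | t ≤ ‖a‖ ^ q} :=
          lintegral_union_le _ _ _
      _ < ⊤ := by
          refine ENNReal.add_lt_top.2 ⟨?_, ?_⟩
          · calc (∫⁻ t in Set.Ioc (0:ℝ) 1,
                ((volume : Measure ℂ).restrict (Metric.ball (0 : ℂ) 1)) {a | t ≤ ‖a‖ ^ q})
                ≤ ∫⁻ _ in Set.Ioc (0:ℝ) 1, B := by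
                  refine setLIntegral_mono' measurableSet_Ioc fun t _ => ?_
                  calc ((volume : Measure ℂ).restrict (Metric.ball (0 : ℂ) 1)) {a | t ≤ ‖a‖ ^ q}
                      ≤ ((volume : Measure ℂ).restrict (Metric.ball (0 : ℂ) 1)) Set.univ :=
                        measure_mono (Set.subset_univ _)
                    _ = B := by rw [Measure.restrict_apply_univ]
              _ = B * volume (Set.Ioc (0:ℝ) 1) := setLIntegral_const _ _
              _ < ⊤ := ENNReal.mul_lt_top measure_ball_lt_top (by simp [Real.volume_Ioc])
          · have hpt : ∀ t ∈ Set.Ioi (1:ℝ),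
                ((volume : Measure ℂ).restrict (Metric.ball (0 : ℂ) 1)) {a | t ≤ ‖a‖ ^ q}
                  ≤ ENNReal.ofReal (t ^ (q⁻¹ * 2)) * B := by
              intro t ht
              have ht1 : (1:ℝ) < t := ht
              have ht0 : (0:ℝ) < t := lt_trans one_pos ht1
              have hsub : {a : ℂ | t ≤ ‖a‖ ^ q} ⊆ Metric.closedBall 0 (t ^ q⁻¹) := by
                intro x hx
                simp only [Set.mem_setOf_eq] at hx
                have hx0 : x ≠ 0 := by
                  rintro rfl
                  rw [norm_zero, Real.zero_rpow hqne] at hx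
                  linarith
                have hxpos : 0 < ‖x‖ := norm_pos_iff.2 hx0
                rw [Metric.mem_closedBall, dist_zero_right]
                exact (Real.le_rpow_inv_iff_of_neg hxpos ht0 hq0).2 hx
              calc ((volume : Measure ℂ).restrict (Metric.ball (0 : ℂ) 1)) {a | t ≤ ‖a‖ ^ q}
                  ≤ (volume : Measure ℂ) {a | t ≤ ‖a‖ ^ q} := Measure.restrict_apply_le _ _
                _ ≤ (volume : Measure ℂ) (Metric.closedBall 0 (t ^ q⁻¹)) := measure_mono hsub
                _ = ENNReal.ofReal ((t ^ q⁻¹) ^ Module.finrank ℝ ℂ) * B :=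
                    Measure.addHaar_closedBall _ _ (Real.rpow_nonneg ht0.le _)
                _ = ENNReal.ofReal (t ^ (q⁻¹ * 2)) * B := by
                    rw [Complex.finrank_real_complex,
                      ← Real.rpow_natCast (t ^ q⁻¹) 2, ← Real.rpow_mul ht0.le]
                    norm_num
            calc (∫⁻ t in Set.Ioi (1:ℝ),
                ((volume : Measure ℂ).restrict (Metric.ball (0 : ℂ) 1)) {a | t ≤ ‖a‖ ^ q})
                ≤ ∫⁻ t in Set.Ioi (1:ℝ), ENNReal.ofReal (t ^ (q⁻¹ * 2)) * B :=
                  setLIntegral_mono' measurableSet_Ioi hpt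
              _ = (∫⁻ t in Set.Ioi (1:ℝ), ENNReal.ofReal (t ^ (q⁻¹ * 2))) * B :=
                  lintegral_mul_const' _ _ hB
              _ < ⊤ := ENNReal.mul_lt_top
                  ((integrableOn_Ioi_rpow_of_lt hexp one_pos).setLIntegral_lt_top)
                  measure_ball_lt_top.lt_top

private lemma scaleKey (q : ℝ) {R : ℝ} (hR : 0 < R) :
    ∫⁻ x in Metric.ball (0 : ℂ) R, ENNReal.ofReal (‖x‖ ^ q)
      = ENNReal.ofReal (R ^ (2 + q)) *
        ∫⁻ x in Metric.ball (0 : ℂ) 1, ENNReal.ofReal (‖x‖ ^ q) := by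
  have hmeas : Measurable fun x : ℂ => ENNReal.ofReal (‖x‖ ^ q) := by fun_prop
  have hmap := Measure.map_addHaar_smul (volume : Measure ℂ) hR.ne'
  have hpre : (fun x : ℂ => R • x) ⁻¹' Metric.ball 0 R = Metric.ball 0 1 := by
    ext x
    simp only [Set.mem_preimage, Metric.mem_ball, dist_zero_right, norm_smul,
      Real.norm_eq_abs, abs_of_pos hR]
    exact mul_lt_iff_lt_one_right hR
  have h2pos : (0:ℝ) < R ^ 2 := by positivity
  have key : (ENNReal.ofReal (R ^ 2))⁻¹
        * ∫⁻ x in Metric.ball (0 : ℂ) R, ENNReal.ofReal (‖x‖ ^ q)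
      = ENNReal.ofReal (R ^ q) *
        ∫⁻ x in Metric.ball (0 : ℂ) 1, ENNReal.ofReal (‖x‖ ^ q) := by
    calc (ENNReal.ofReal (R ^ 2))⁻¹
          * ∫⁻ x in Metric.ball (0 : ℂ) R, ENNReal.ofReal (‖x‖ ^ q)
        = ∫⁻ x in Metric.ball (0 : ℂ) R, ENNReal.ofReal (‖x‖ ^ q)
            ∂((ENNReal.ofReal |(R ^ Module.finrank ℝ ℂ : ℝ)⁻¹|) • volume) := by
          rw [Measure.restrict_smul, lintegral_smul_measure, Complex.finrank_real_complex,
            abs_of_pos (by positivity), ENNReal.ofReal_inv_of_pos h2pos, smul_eq_mul]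
      _ = ∫⁻ x in Metric.ball (0 : ℂ) R, ENNReal.ofReal (‖x‖ ^ q)
            ∂(Measure.map (fun x : ℂ => R • x) volume) := by rw [hmap]
      _ = ∫⁻ x in (fun x : ℂ => R • x) ⁻¹' Metric.ball 0 R,
            ENNReal.ofReal (‖R • x‖ ^ q) := by
          exact setLIntegral_map measurableSet_ball hmeas (measurable_id.const_smul R)
      _ = ∫⁻ x in Metric.ball (0 : ℂ) 1,
            ENNReal.ofReal (R ^ q) * ENNReal.ofReal (‖x‖ ^ q) := by
          rw [hpre]
          refine lintegral_congr fun x => ?_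
          rw [norm_smul, Real.norm_eq_abs, abs_of_pos hR,
            Real.mul_rpow hR.le (norm_nonneg x),
            ENNReal.ofReal_mul (Real.rpow_nonneg hR.le q)]
      _ = ENNReal.ofReal (R ^ q) *
            ∫⁻ x in Metric.ball (0 : ℂ) 1, ENNReal.ofReal (‖x‖ ^ q) :=
          lintegral_const_mul' _ _ ENNReal.ofReal_ne_top
  have hRq : R ^ (2 + q) = R ^ 2 * R ^ q := by
    rw [Real.rpow_add hR]
    congr 1
    rw [show (2:ℝ) = ((2:ℕ):ℝ) by norm_num, Real.rpow_natCast]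
  calc ∫⁻ x in Metric.ball (0 : ℂ) R, ENNReal.ofReal (‖x‖ ^ q)
      = ENNReal.ofReal (R ^ 2) * ((ENNReal.ofReal (R ^ 2))⁻¹
          * ∫⁻ x in Metric.ball (0 : ℂ) R, ENNReal.ofReal (‖x‖ ^ q)) := by
        rw [← mul_assoc, ENNReal.mul_inv_cancel (ENNReal.ofReal_pos.2 h2pos).ne'
          ENNReal.ofReal_ne_top, one_mul]
    _ = ENNReal.ofReal (R ^ 2) * (ENNReal.ofReal (R ^ q) *
          ∫⁻ x in Metric.ball (0 : ℂ) 1, ENNReal.ofReal (‖x‖ ^ q)) := by rw [key]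
    _ = ENNReal.ofReal (R ^ (2 + q)) *
          ∫⁻ x in Metric.ball (0 : ℂ) 1, ENNReal.ofReal (‖x‖ ^ q) := by
        rw [← mul_assoc, ← ENNReal.ofReal_mul h2pos.le, hRq]

/-- For `a ≥ 0` and `0 < p < 2 + a`, there is `c = c(a,p)` such that for every `y₁` on the
unit circle and every `R ∈ (0,3]`,
`∫_{D₀ ∩ B(y₁,R)} (1 − |x|)^{a+p}·|x − y₁|^{−2p} dx ≤ c·R^{2+a−p}`. -/
theorem integral_near_boundary_ball_le (a p : ℝ) (ha : 0 ≤ a) (hp : 0 < p)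
    (hpa : p < 2 + a) :
    ∃ c : ℝ, 0 < c ∧ ∀ y₁ : ℂ, ‖y₁‖ = 1 → ∀ R : ℝ, 0 < R → R ≤ 3 →
      ∫ x in Metric.ball (0 : ℂ) 1 ∩ Metric.ball y₁ R,
          (1 - ‖x‖) ^ (a + p) * ‖x - y₁‖ ^ (-(2 * p)) ≤ c * R ^ (2 + a - p) := by
  have hq : (-2 : ℝ) < a - p := by linarith
  set K := ∫⁻ x in Metric.ball (0 : ℂ) 1, ENNReal.ofReal (‖x‖ ^ (a - p)) with hK
  have hKfin : K < ⊤ := finKey (a - p) hq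
  refine ⟨K.toReal + 1, by positivity, ?_⟩
  intro y₁ hy₁ R hR hR3
  set S := Metric.ball (0 : ℂ) 1 ∩ Metric.ball y₁ R with hS
  have hSm : MeasurableSet S := measurableSet_ball.inter measurableSet_ball
  have hfm : Measurable fun x : ℂ => (1 - ‖x‖) ^ (a + p) * ‖x - y₁‖ ^ (-(2 * p)) := by fun_prop
  have hf_nn : 0 ≤ᵐ[(volume : Measure ℂ).restrict S]
      fun x : ℂ => (1 - ‖x‖) ^ (a + p) * ‖x - y₁‖ ^ (-(2 * p)) := by
    refine (ae_restrict_iff' hSm).2 (Filter.Eventually.of_forall fun x hx => ?_)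
    have hx1 : ‖x‖ < 1 := mem_ball_zero_iff.1 hx.1
    exact mul_nonneg (Real.rpow_nonneg (by linarith) _) (Real.rpow_nonneg (norm_nonneg _) _)
  have hpt : ∀ x ∈ S,
      ENNReal.ofReal ((1 - ‖x‖) ^ (a + p) * ‖x - y₁‖ ^ (-(2 * p)))
        ≤ ENNReal.ofReal (‖x - y₁‖ ^ (a - p)) := by
    intro x hx
    have hx1 : ‖x‖ < 1 := mem_ball_zero_iff.1 hx.1
    have hd : 1 - ‖x‖ ≤ ‖x - y₁‖ := by
      have h1 := norm_sub_norm_le y₁ x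
      rw [hy₁, norm_sub_rev] at h1
      linarith
    have hd0 : (0:ℝ) < ‖x - y₁‖ := lt_of_lt_of_le (by linarith) hd
    apply ENNReal.ofReal_le_ofReal
    calc (1 - ‖x‖) ^ (a + p) * ‖x - y₁‖ ^ (-(2 * p))
        ≤ ‖x - y₁‖ ^ (a + p) * ‖x - y₁‖ ^ (-(2 * p)) := by
          apply mul_le_mul_of_nonneg_right
          · exact Real.rpow_le_rpow (by linarith) hd (by linarith)
          · exact Real.rpow_nonneg (norm_nonneg _) _
      _ = ‖x - y₁‖ ^ (a - p) := by
          rw [← Real.rpow_add hd0]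
          congr 1
          ring
  have htrans :
      ∫⁻ x in Metric.ball y₁ R, ENNReal.ofReal (‖x - y₁‖ ^ (a - p))
        = ∫⁻ x in Metric.ball (0 : ℂ) R, ENNReal.ofReal (‖x‖ ^ (a - p)) := by
    have hmeas : Measurable fun x : ℂ => ENNReal.ofReal (‖x - y₁‖ ^ (a - p)) := by fun_prop
    have hmp := measurePreserving_add_right (volume : Measure ℂ) y₁
    have hpre : (fun x : ℂ => x + y₁) ⁻¹' Metric.ball y₁ R = Metric.ball 0 R := by
      ext x
      simp [Metric.mem_ball, dist_eq_norm]
    calc ∫⁻ x in Metric.ball y₁ R, ENNReal.ofReal (‖x - y₁‖ ^ (a - p))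
        = ∫⁻ x in Metric.ball y₁ R, ENNReal.ofReal (‖x - y₁‖ ^ (a - p))
            ∂(Measure.map (fun x : ℂ => x + y₁) volume) := by rw [hmp.map_eq]
      _ = ∫⁻ x in (fun x : ℂ => x + y₁) ⁻¹' Metric.ball y₁ R,
            ENNReal.ofReal (‖x + y₁ - y₁‖ ^ (a - p)) :=
          setLIntegral_map measurableSet_ball hmeas (measurable_add_const y₁)
      _ = ∫⁻ x in Metric.ball (0 : ℂ) R, ENNReal.ofReal (‖x‖ ^ (a - p)) := by
          rw [hpre]
          simp
  rw [integral_eq_lintegral_of_nonneg_ae hf_nn hfm.aestronglyMeasurable]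
  calc (∫⁻ x in S, ENNReal.ofReal ((1 - ‖x‖) ^ (a + p) * ‖x - y₁‖ ^ (-(2 * p)))).toReal
      ≤ (ENNReal.ofReal (R ^ (2 + (a - p))) * K).toReal := by
        apply ENNReal.toReal_mono
        · exact ENNReal.mul_ne_top ENNReal.ofReal_ne_top hKfin.ne
        · calc ∫⁻ x in S, ENNReal.ofReal ((1 - ‖x‖) ^ (a + p) * ‖x - y₁‖ ^ (-(2 * p)))
              ≤ ∫⁻ x in S, ENNReal.ofReal (‖x - y₁‖ ^ (a - p)) := setLIntegral_mono' hSm hpt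
            _ ≤ ∫⁻ x in Metric.ball y₁ R, ENNReal.ofReal (‖x - y₁‖ ^ (a - p)) :=
                lintegral_mono_set Set.inter_subset_right
            _ = ∫⁻ x in Metric.ball (0 : ℂ) R, ENNReal.ofReal (‖x‖ ^ (a - p)) := htrans
            _ = ENNReal.ofReal (R ^ (2 + (a - p))) * K := scaleKey (a - p) hR
    _ = R ^ (2 + (a - p)) * K.toReal := by
        rw [ENNReal.toReal_mul, ENNReal.toReal_ofReal (Real.rpow_nonneg hR.le _)]
    _ ≤ (K.toReal + 1) * R ^ (2 + a - p) := by
        have heq : 2 + (a - p) = 2 + a - p := by ring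
        rw [heq]
        have hRp : 0 ≤ R ^ (2 + a - p) := Real.rpow_nonneg hR.le _
        nlinarith [ENNReal.toReal_nonneg (a := K)]
end

section
/- Let a ≥ 0 and p > 0. There exists a constant c = c(a,p) such that for every y₁ on the unit circle ∂D₀ and every δ ∈ (0, 1]: ∫_{D₀ \ B(y₁,2δ)} (1 − |x|)^{a+p} · |x − y₁|^{−3p} dx is at most c if 0 < p < (2+a)/2; at most c·(1 + log(1/δ)) if p = (2+a)/2; and at most c·δ^{2+a−2p} if p > (2+a)/2. -/
open MeasureTheory Metric Set


lemma polar_annulus (s ρ R : ℝ) (h0 : 0 < ρ) (hρR : ρ ≤ R) :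
    ∫ x : ℂ in Metric.closedBall 0 R \ Metric.ball 0 ρ, ‖x‖ ^ s
      = (2 * Real.pi) * ∫ r in ρ..R, r * r ^ s := by
  classical
  have hmeas : MeasurableSet (Metric.closedBall (0:ℂ) R \ Metric.ball 0 ρ) :=
    measurableSet_closedBall.diff measurableSet_ball
  rw [← integral_indicator hmeas]
  have hind : ∀ x : ℂ, (Metric.closedBall (0:ℂ) R \ Metric.ball 0 ρ).indicator
      (fun x => ‖x‖ ^ s) x = (Set.Icc ρ R).indicator (fun t => t ^ s) ‖x‖ := by
    intro x
    rw [Set.indicator_apply, Set.indicator_apply]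
    congr 1
    simp [mem_closedBall_zero_iff, mem_ball_zero_iff, not_lt, and_comm, eq_iff_iff]
  simp_rw [hind]
  rw [integral_fun_norm_addHaar volume (fun t => (Set.Icc ρ R).indicator (fun t => t ^ s) t)]
  have hdim : Module.finrank ℝ ℂ = 2 := Complex.finrank_real_complex
  rw [hdim]
  have hvol : (volume (Metric.ball (0:ℂ) 1)).toReal = Real.pi := by
    simp [Complex.volume_ball]
  rw [measureReal_def, hvol]
  have key : ∫ y in Set.Ioi (0:ℝ), y ^ (2 - 1) • (Set.Icc ρ R).indicator (fun t => t ^ s) y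
      = ∫ r in ρ..R, r * r ^ s := by
    have h1 : ∀ y : ℝ, y ^ (2 - 1) • (Set.Icc ρ R).indicator (fun t => t ^ s) y
        = (Set.Icc ρ R).indicator (fun t => t * t ^ s) y := by
      intro y
      simp only [Set.indicator_apply, smul_eq_mul, pow_one]
      split <;> simp
    simp_rw [h1]
    rw [setIntegral_indicator measurableSet_Icc]
    have h2 : Set.Ioi (0:ℝ) ∩ Set.Icc ρ R = Set.Icc ρ R := by
      rw [Set.inter_eq_right]
      intro t ht
      exact lt_of_lt_of_le h0 ht.1
    rw [h2, integral_Icc_eq_integral_Ioc, ← intervalIntegral.integral_of_le hρR]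
  rw [key]
  simp only [nsmul_eq_mul, smul_eq_mul, Nat.cast_ofNat]
  ring

open MeasureTheory Metric Set

lemma translate_annulus (s ρ R : ℝ) (y : ℂ) :
    ∫ x in Metric.closedBall y R \ Metric.ball y ρ, ‖x - y‖ ^ s
      = ∫ x : ℂ in Metric.closedBall 0 R \ Metric.ball 0 ρ, ‖x‖ ^ s := by
  classical
  have hm1 : MeasurableSet (Metric.closedBall y R \ Metric.ball y ρ) :=
    measurableSet_closedBall.diff measurableSet_ball
  have hm0 : MeasurableSet (Metric.closedBall (0:ℂ) R \ Metric.ball 0 ρ) :=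
    measurableSet_closedBall.diff measurableSet_ball
  rw [← integral_indicator hm1, ← integral_indicator hm0]
  have h : ∀ x : ℂ, (Metric.closedBall y R \ Metric.ball y ρ).indicator
      (fun x => ‖x - y‖ ^ s) x
      = (Metric.closedBall (0:ℂ) R \ Metric.ball 0 ρ).indicator (fun z => ‖z‖ ^ s) (x - y) := by
    intro x
    rw [Set.indicator_apply, Set.indicator_apply]
    congr 1
    · simp [mem_closedBall_iff_norm, mem_ball_iff_norm, mem_closedBall_zero_iff,
        mem_ball_zero_iff, eq_iff_iff, Complex.dist_eq]
  simp_rw [h]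
  exact integral_sub_right_eq_self _ y

lemma integrableOn_annulus (s ρ R : ℝ) (h0 : 0 < ρ) (y : ℂ) :
    IntegrableOn (fun x => ‖x - y‖ ^ s) (Metric.closedBall y R \ Metric.ball y ρ) := by
  apply ContinuousOn.integrableOn_compact
    ((isCompact_closedBall y R).diff isOpen_ball)
  apply ContinuousOn.rpow_const
  · exact ((continuous_sub_right y).norm).continuousOn
  · intro x hx
    left
    have h2 := hx.2
    simp only [Metric.mem_ball, not_lt, dist_eq_norm] at h2
    exact (lt_of_lt_of_le h0 h2).ne'

open MeasureTheory Metric Set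

lemma reduce_to_radial (a p : ℝ) (ha : 0 ≤ a) (hp : 0 < p) (y₁ : ℂ) (hy : ‖y₁‖ = 1)
    (δ : ℝ) (hδ0 : 0 < δ) (hδ1 : δ ≤ 1) :
    ∫ x in Metric.ball (0 : ℂ) 1 \ Metric.ball y₁ (2 * δ),
        (1 - ‖x‖) ^ (a + p) * ‖x - y₁‖ ^ (-(3 * p))
      ≤ 2 * Real.pi * ∫ r in (2 * δ)..2, r ^ (a - 2 * p + 1) := by
  have hρ : (0:ℝ) < 2 * δ := by linarith
  set S := Metric.ball (0 : ℂ) 1 \ Metric.ball y₁ (2 * δ) with hS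
  set A := Metric.closedBall y₁ 2 \ Metric.ball y₁ (2 * δ) with hA
  have hSmeas : MeasurableSet S := measurableSet_ball.diff measurableSet_ball
  have hSA : S ⊆ A := by
    intro x hx
    refine ⟨?_, hx.2⟩
    have h1 : ‖x‖ < 1 := by simpa [mem_ball_zero_iff] using hx.1
    have : dist x y₁ ≤ ‖x‖ + ‖y₁‖ := by
      rw [dist_eq_norm]
      exact norm_sub_le x y₁
    simp only [Metric.mem_closedBall]
    linarith [this, hy ▸ h1]
  have hg_int : IntegrableOn (fun x => ‖x - y₁‖ ^ (a - 2 * p)) A :=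
    integrableOn_annulus _ _ _ hρ _
  -- pointwise facts on S
  have hnorm_pos : ∀ x ∈ S, 2 * δ ≤ ‖x - y₁‖ := by
    intro x hx
    have h2 := hx.2
    simp only [Metric.mem_ball, not_lt, dist_eq_norm] at h2
    exact h2
  have hstep1 : ∫ x in S, (1 - ‖x‖) ^ (a + p) * ‖x - y₁‖ ^ (-(3 * p))
      ≤ ∫ x in S, ‖x - y₁‖ ^ (a - 2 * p) := by
    apply integral_mono_of_nonneg
    · apply ae_restrict_of_forall_mem hSmeas
      intro x hx
      have h1 : ‖x‖ < 1 := by simpa [mem_ball_zero_iff] using hx.1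
      have : (0:ℝ) ≤ 1 - ‖x‖ := by linarith
      positivity
    · exact hg_int.mono_set hSA
    · apply ae_restrict_of_forall_mem hSmeas
      intro x hx
      have h1 : ‖x‖ < 1 := by simpa [mem_ball_zero_iff] using hx.1
      have h0 : (0:ℝ) < ‖x - y₁‖ := lt_of_lt_of_le hρ (hnorm_pos x hx)
      have h2 : 1 - ‖x‖ ≤ ‖x - y₁‖ := by
        have := norm_sub_norm_le y₁ x
        rw [hy, norm_sub_rev] at this
        linarith
      calc (1 - ‖x‖) ^ (a + p) * ‖x - y₁‖ ^ (-(3 * p))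
          ≤ ‖x - y₁‖ ^ (a + p) * ‖x - y₁‖ ^ (-(3 * p)) := by
            apply mul_le_mul_of_nonneg_right
            · exact Real.rpow_le_rpow (by linarith) h2 (by linarith)
            · positivity
        _ = ‖x - y₁‖ ^ (a - 2 * p) := by
            rw [← Real.rpow_add h0]
            ring_nf
  have hstep2 : ∫ x in S, ‖x - y₁‖ ^ (a - 2 * p) ≤ ∫ x in A, ‖x - y₁‖ ^ (a - 2 * p) := by
    apply setIntegral_mono_set hg_int
    · apply ae_restrict_of_forall_mem
        (measurableSet_closedBall.diff measurableSet_ball)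
      intro x _
      positivity
    · exact HasSubset.Subset.eventuallyLE hSA
  have hstep3 : ∫ x in A, ‖x - y₁‖ ^ (a - 2 * p)
      = 2 * Real.pi * ∫ r in (2 * δ)..2, r * r ^ (a - 2 * p) := by
    rw [hA, translate_annulus, polar_annulus _ _ _ hρ (by linarith)]
  have hstep4 : (∫ r in (2 * δ)..2, r * r ^ (a - 2 * p))
      = ∫ r in (2 * δ)..2, r ^ (a - 2 * p + 1) := by
    apply intervalIntegral.integral_congr
    intro r hr
    rw [Set.uIcc_of_le (by linarith : 2 * δ ≤ 2)] at hr
    have hr0 : (0:ℝ) < r := lt_of_lt_of_le hρ hr.1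
    show r * r ^ (a - 2 * p) = r ^ (a - 2 * p + 1)
    rw [Real.rpow_add_one hr0.ne', mul_comm]
  calc _ ≤ _ := hstep1
    _ ≤ _ := hstep2
    _ = _ := hstep3
    _ = _ := by rw [hstep4]
/-- For `a ≥ 0` and `p > 0`, there is `c = c(a,p)` such that for every `y₁` on the unit circle
and every `δ ∈ (0,1]`, the integral `∫_{D₀ \ B(y₁,2δ)} (1 − |x|)^{a+p}·|x − y₁|^{−3p} dx` is at
most `c` if `p < (2+a)/2`, at most `c·(1 + log(1/δ))` if `p = (2+a)/2`, and at most
`c·δ^{2+a−2p}` if `p > (2+a)/2`. -/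
theorem integral_away_from_boundary_point_le (a p : ℝ) (ha : 0 ≤ a) (hp : 0 < p) :
    ∃ c : ℝ, 0 < c ∧ ∀ y₁ : ℂ, ‖y₁‖ = 1 → ∀ δ : ℝ, 0 < δ → δ ≤ 1 →
      ((p < (2 + a) / 2 →
        ∫ x in Metric.ball (0 : ℂ) 1 \ Metric.ball y₁ (2 * δ),
          (1 - ‖x‖) ^ (a + p) * ‖x - y₁‖ ^ (-(3 * p)) ≤ c) ∧
      (p = (2 + a) / 2 →
        ∫ x in Metric.ball (0 : ℂ) 1 \ Metric.ball y₁ (2 * δ),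
          (1 - ‖x‖) ^ (a + p) * ‖x - y₁‖ ^ (-(3 * p)) ≤ c * (1 + Real.log (1 / δ))) ∧
      ((2 + a) / 2 < p →
        ∫ x in Metric.ball (0 : ℂ) 1 \ Metric.ball y₁ (2 * δ),
          (1 - ‖x‖) ^ (a + p) * ‖x - y₁‖ ^ (-(3 * p)) ≤ c * δ ^ (2 + a - 2 * p))) := by
  have hπ := Real.pi_pos
  rcases lt_trichotomy p ((2 + a) / 2) with hcase | hcase | hcase
  · -- subcritical
    have he : (0:ℝ) < 2 + a - 2 * p := by linarith
    refine ⟨2 * Real.pi * (2 ^ (2 + a - 2 * p) / (2 + a - 2 * p)) + 1, by positivity,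
      fun y₁ hy δ hδ0 hδ1 => ⟨fun _ => ?_, fun h => absurd h (by linarith),
        fun h => absurd h (by linarith)⟩⟩
    have hρ : (0:ℝ) < 2 * δ := by linarith
    have hJ : (∫ r in (2 * δ)..2, r ^ (a - 2 * p + 1))
        = (2 ^ (2 + a - 2 * p) - (2 * δ) ^ (2 + a - 2 * p)) / (2 + a - 2 * p) := by
      rw [integral_rpow (Or.inl (by linarith))]
      have h2 : a - 2 * p + 1 + 1 = 2 + a - 2 * p := by ring
      rw [h2]
    have hJ2 : (∫ r in (2 * δ)..2, r ^ (a - 2 * p + 1))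
        ≤ 2 ^ (2 + a - 2 * p) / (2 + a - 2 * p) := by
      rw [hJ, div_le_div_iff_of_pos_right he]
      have hD : 0 ≤ (2 * δ) ^ (2 + a - 2 * p) := Real.rpow_nonneg (by linarith) _
      linarith
    calc ∫ x in Metric.ball (0 : ℂ) 1 \ Metric.ball y₁ (2 * δ),
          (1 - ‖x‖) ^ (a + p) * ‖x - y₁‖ ^ (-(3 * p))
        ≤ 2 * Real.pi * ∫ r in (2 * δ)..2, r ^ (a - 2 * p + 1) :=
          reduce_to_radial a p ha hp y₁ hy δ hδ0 hδ1
      _ ≤ 2 * Real.pi * (2 ^ (2 + a - 2 * p) / (2 + a - 2 * p)) :=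
          mul_le_mul_of_nonneg_left hJ2 (by positivity)
      _ ≤ _ := by linarith
  · -- critical
    refine ⟨2 * Real.pi + 1, by positivity,
      fun y₁ hy δ hδ0 hδ1 => ⟨fun h => absurd h (by linarith), fun _ => ?_,
        fun h => absurd h (by linarith)⟩⟩
    have hρ : (0:ℝ) < 2 * δ := by linarith
    have hexp : a - 2 * p + 1 = -1 := by rw [hcase]; ring
    have hJ : (∫ r in (2 * δ)..2, r ^ (a - 2 * p + 1)) = Real.log (1 / δ) := by
      rw [hexp]
      have : (∫ r in (2 * δ)..2, r ^ (-1 : ℝ)) = ∫ r in (2 * δ)..2, r⁻¹ := by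
        apply intervalIntegral.integral_congr
        intro r _
        simp [Real.rpow_neg_one]
      rw [this, integral_inv_of_pos hρ two_pos]
      congr 1
      field_simp
    have hlog : 0 ≤ Real.log (1 / δ) := by
      apply Real.log_nonneg
      rw [le_div_iff₀ hδ0]
      linarith
    calc ∫ x in Metric.ball (0 : ℂ) 1 \ Metric.ball y₁ (2 * δ),
          (1 - ‖x‖) ^ (a + p) * ‖x - y₁‖ ^ (-(3 * p))
        ≤ 2 * Real.pi * ∫ r in (2 * δ)..2, r ^ (a - 2 * p + 1) :=
          reduce_to_radial a p ha hp y₁ hy δ hδ0 hδ1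
      _ = 2 * Real.pi * Real.log (1 / δ) := by rw [hJ]
      _ ≤ (2 * Real.pi + 1) * (1 + Real.log (1 / δ)) := by nlinarith
  · -- supercritical
    have he : 2 + a - 2 * p < 0 := by linarith
    refine ⟨2 * Real.pi * 2 ^ (2 + a - 2 * p) / (2 * p - (2 + a)), by
      apply div_pos (by positivity) (by linarith),
      fun y₁ hy δ hδ0 hδ1 => ⟨fun h => absurd h (by linarith),
        fun h => absurd h (by linarith), fun _ => ?_⟩⟩
    have hρ : (0:ℝ) < 2 * δ := by linarith
    have hne : a - 2 * p + 1 ≠ -1 := fun h => by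
      have : 2 + a - 2 * p = 0 := by linarith
      linarith
    have h0mem : (0:ℝ) ∉ Set.uIcc (2 * δ) 2 := by
      rw [Set.uIcc_of_le (by linarith)]
      intro h
      have := h.1
      linarith
    have hJ : (∫ r in (2 * δ)..2, r ^ (a - 2 * p + 1))
        = (2 ^ (2 + a - 2 * p) - (2 * δ) ^ (2 + a - 2 * p)) / (2 + a - 2 * p) := by
      rw [integral_rpow (Or.inr ⟨hne, h0mem⟩)]
      have h2 : a - 2 * p + 1 + 1 = 2 + a - 2 * p := by ring
      rw [h2]
    have hsplit : (2 * δ) ^ (2 + a - 2 * p) = 2 ^ (2 + a - 2 * p) * δ ^ (2 + a - 2 * p) :=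
      Real.mul_rpow (by norm_num) hδ0.le
    have hJ2 : (∫ r in (2 * δ)..2, r ^ (a - 2 * p + 1))
        ≤ 2 ^ (2 + a - 2 * p) * δ ^ (2 + a - 2 * p) / (2 * p - (2 + a)) := by
      have key : (2 ^ (2 + a - 2 * p) - (2 * δ) ^ (2 + a - 2 * p)) / (2 + a - 2 * p)
          = ((2 * δ) ^ (2 + a - 2 * p) - 2 ^ (2 + a - 2 * p)) / (2 * p - (2 + a)) := by
        rw [div_eq_div_iff (by linarith : (2 + a - 2 * p) ≠ 0)
          (by linarith : (2 * p - (2 + a)) ≠ 0)]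
        ring
      rw [hJ, key, hsplit, div_le_div_iff_of_pos_right (by linarith : (0:ℝ) < 2 * p - (2 + a))]
      have h2pos : (0:ℝ) < 2 ^ (2 + a - 2 * p) := Real.rpow_pos_of_pos two_pos _
      linarith
    calc ∫ x in Metric.ball (0 : ℂ) 1 \ Metric.ball y₁ (2 * δ),
          (1 - ‖x‖) ^ (a + p) * ‖x - y₁‖ ^ (-(3 * p))
        ≤ 2 * Real.pi * ∫ r in (2 * δ)..2, r ^ (a - 2 * p + 1) :=
          reduce_to_radial a p ha hp y₁ hy δ hδ0 hδ1
      _ ≤ 2 * Real.pi * (2 ^ (2 + a - 2 * p) * δ ^ (2 + a - 2 * p) / (2 * p - (2 + a))) :=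
          mul_le_mul_of_nonneg_left hJ2 (by positivity)
      _ = 2 * Real.pi * 2 ^ (2 + a - 2 * p) / (2 * p - (2 + a)) * δ ^ (2 + a - 2 * p) := by
          ring
end

section
/- Let a ≥ 0 and 0 < p < (2+a)/2. There exists a constant c = c(p,a) such that for all y₁, y₂ on the unit circle ∂D₀, ∫_{D₀} (1 − |x|)^a · |P₀(x,y₁) − P₀(x,y₂)|^p dx ≤ c·|y₁ − y₂|^p. -/
open MeasureTheory

/-- The Poisson kernel of the unit disc, viewed in `ℂ ≃ ℝ²`. -/
noncomputable def unitDiscPoissonKernel (x y : ℂ) : ℝ :=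
  (1 / (2 * Real.pi)) * (1 - ‖x‖ ^ 2) / ‖y - x‖ ^ 2

open Metric
open scoped ENNReal NNReal

lemma integrableOn_norm_rpow_ball {e : ℝ} (he : -2 < e) :
    IntegrableOn (fun z : ℂ => ‖z‖ ^ e) (Metric.ball 0 2) := by
  have hmeas : Measurable fun z : ℂ => ‖z‖ ^ e :=
    (show Measurable fun t : ℝ => t ^ e by measurability).comp measurable_norm
  rcases le_or_gt 0 e with he0 | he0
  · refine Measure.integrableOn_of_bounded (M := (2:ℝ) ^ e) measure_ball_lt_top.ne
      hmeas.aestronglyMeasurable ?_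
    filter_upwards [ae_restrict_mem measurableSet_ball] with z hz
    rw [Real.norm_of_nonneg (Real.rpow_nonneg (norm_nonneg z) e)]
    exact Real.rpow_le_rpow (norm_nonneg z) (le_of_lt (mem_ball_zero_iff.mp hz)) he0
  · refine ⟨hmeas.aestronglyMeasurable, ?_⟩
    rw [hasFiniteIntegral_iff_norm]
    set A : ℕ → Set ℂ := fun n => ball 0 (2 / 2 ^ n) \ ball 0 (2 / 2 ^ (n + 1)) with hA
    have hcover : ball (0:ℂ) 2 ⊆ {0} ∪ ⋃ n, A n := by
      intro z hz
      rcases eq_or_ne z 0 with rfl | hz0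
      · exact Set.mem_union_left _ rfl
      · have hzpos : 0 < ‖z‖ := norm_pos_iff.mpr hz0
        have hex : ∃ n : ℕ, 2 / 2 ^ (n + 1) ≤ ‖z‖ := by
          obtain ⟨n, hn⟩ := exists_pow_lt_of_lt_one hzpos (by norm_num : (1:ℝ)/2 < 1)
          refine ⟨n, ?_⟩
          have h : ((1:ℝ)/2) ^ n = 2 / 2 ^ (n+1) := by
            rw [div_pow, one_pow, pow_succ]; ring
          linarith [h ▸ hn]
        classical
        obtain ⟨n₀, h1, hmin⟩ : ∃ n, 2 / 2 ^ (n+1) ≤ ‖z‖ ∧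
            ∀ m < n, ¬ (2 / 2 ^ (m+1) ≤ ‖z‖) :=
          ⟨Nat.find hex, Nat.find_spec hex, fun m hm => Nat.find_min hex hm⟩
        have h2 : ‖z‖ < 2 / 2 ^ n₀ := by
          rcases Nat.eq_zero_or_pos n₀ with h | h
          · rw [h]; simpa using mem_ball_zero_iff.mp hz
          · obtain ⟨m, rfl⟩ := Nat.exists_eq_add_of_lt h
            have := hmin m (by omega)
            push_neg at this
            simpa using this
        refine Set.mem_union_right _ (Set.mem_iUnion.mpr ⟨n₀, ?_⟩)
        exact ⟨mem_ball_zero_iff.mpr h2,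
          fun hmem => absurd (mem_ball_zero_iff.mp hmem) (not_lt.mpr h1)⟩
    calc ∫⁻ z in ball (0:ℂ) 2, ENNReal.ofReal ‖‖z‖ ^ e‖
        ≤ ∫⁻ z in ({0} ∪ ⋃ n, A n : Set ℂ), ENNReal.ofReal ‖‖z‖ ^ e‖ :=
          lintegral_mono_set hcover
      _ ≤ (∫⁻ z in ({0} : Set ℂ), ENNReal.ofReal ‖‖z‖ ^ e‖) +
            ∫⁻ z in (⋃ n, A n : Set ℂ), ENNReal.ofReal ‖‖z‖ ^ e‖ :=
          lintegral_union_le _ _ _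
      _ ≤ 0 + ∑' n, ∫⁻ z in A n, ENNReal.ofReal ‖‖z‖ ^ e‖ := by
          gcongr
          · exact le_of_eq (setLIntegral_measure_zero _ _ (measure_singleton 0))
          · exact lintegral_iUnion_le _ _
      _ = ∑' n, ∫⁻ z in A n, ENNReal.ofReal ‖‖z‖ ^ e‖ := by rw [zero_add]
      _ ≤ ∑' n, ENNReal.ofReal ((2 / 2 ^ (n+1) : ℝ) ^ e) * volume (A n) := by
          gcongr with n
          have hAn : MeasurableSet (A n) := measurableSet_ball.diff measurableSet_ball
          calc ∫⁻ z in A n, ENNReal.ofReal ‖‖z‖ ^ e‖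
              ≤ ∫⁻ _ in A n, ENNReal.ofReal ((2 / 2 ^ (n+1) : ℝ) ^ e) := by
                refine setLIntegral_mono' hAn fun z hz => ?_
                rw [Real.norm_of_nonneg (Real.rpow_nonneg (norm_nonneg z) e)]
                refine ENNReal.ofReal_le_ofReal ?_
                refine Real.rpow_le_rpow_of_nonpos (by positivity) ?_ he0.le
                have h := hz.2
                rw [mem_ball_zero_iff] at h
                push_neg at h
                exact h
            _ = ENNReal.ofReal ((2 / 2 ^ (n+1) : ℝ) ^ e) * volume (A n) := by
                rw [setLIntegral_const]
      _ ≤ ∑' n, ENNReal.ofReal ((2 / 2 ^ (n+1) : ℝ) ^ e) *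
            volume (ball (0:ℂ) (2 / 2 ^ n)) := by
          gcongr with n
          exact Set.diff_subset
      _ = ∑' n, ENNReal.ofReal ((4 * Real.pi) * ((1/2:ℝ) ^ e * (1/4)) ^ n) := by
          congr 1; funext n
          rw [Complex.volume_ball]
          rw [← ENNReal.ofReal_pow (by positivity : (0:ℝ) ≤ 2 / 2 ^ n)]
          rw [show ((NNReal.pi : ℝ≥0∞)) = ENNReal.ofReal Real.pi by
            rw [← NNReal.coe_real_pi, ENNReal.ofReal_coe_nnreal]]
          rw [← ENNReal.ofReal_mul (by positivity), ← ENNReal.ofReal_mul (by positivity)]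
          congr 1
          have hs : (2 / 2 ^ (n+1) : ℝ) = ((1:ℝ)/2) ^ n := by
            rw [div_pow, one_pow, pow_succ]; ring
          have ht : ((2:ℝ) / 2 ^ n) ^ 2 = 4 * ((1:ℝ)/4) ^ n := by
            rw [div_pow, div_pow, one_pow]
            rw [show ((2:ℝ)^n)^2 = 4^n by rw [← pow_mul, mul_comm n 2, pow_mul]; norm_num]
            field_simp
            norm_num
          have hse : (2 / 2 ^ (n+1) : ℝ) ^ e = (((1:ℝ)/2) ^ e) ^ n := by
            rw [hs, ← Real.rpow_natCast ((1:ℝ)/2) n, ← Real.rpow_mul (by norm_num),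
              mul_comm, Real.rpow_mul (by norm_num), Real.rpow_natCast]
          rw [hse, ht, mul_pow]
          ring
      _ < ⊤ := by
          have hq : ((1/2:ℝ) ^ e * (1/4)) < 1 := by
            have h1 : ((1:ℝ)/2) ^ e = 2 ^ (-e) := by
              rw [one_div, ← Real.rpow_neg_one, ← Real.rpow_mul (by norm_num)]
              ring_nf
            have h2 : (2:ℝ) ^ (-e) < 2 ^ (2:ℝ) :=
              Real.rpow_lt_rpow_of_exponent_lt one_lt_two (by linarith)
            have h3 : (2:ℝ) ^ (2:ℝ) = 4 := by
              rw [show (2:ℝ) = ((2:ℕ):ℝ) by norm_num, Real.rpow_natCast]; norm_num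
            nlinarith [Real.rpow_pos_of_pos (by norm_num : (0:ℝ) < 2) (-e)]
          have hq0 : (0:ℝ) ≤ (1/2:ℝ) ^ e * (1/4) := by positivity
          calc ∑' n, ENNReal.ofReal ((4 * Real.pi) * ((1/2:ℝ) ^ e * (1/4)) ^ n)
              = ∑' n, ENNReal.ofReal (4 * Real.pi) *
                  (ENNReal.ofReal ((1/2:ℝ) ^ e * (1/4))) ^ n := by
                congr 1; funext n
                rw [← ENNReal.ofReal_pow hq0, ← ENNReal.ofReal_mul (by positivity)]
            _ = ENNReal.ofReal (4 * Real.pi) *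
                  ∑' n, (ENNReal.ofReal ((1/2:ℝ) ^ e * (1/4))) ^ n := ENNReal.tsum_mul_left
            _ < ⊤ := by
                rw [ENNReal.tsum_geometric]
                refine ENNReal.mul_lt_top ENNReal.ofReal_lt_top ?_
                rw [ENNReal.inv_lt_top]
                rw [tsub_pos_iff_lt]
                exact ENNReal.ofReal_lt_one.mpr hq

lemma add_rpow_le' {u v p : ℝ} (hu : 0 ≤ u) (hv : 0 ≤ v) (hp : 0 ≤ p) :
    (u + v) ^ p ≤ 2 ^ p * (u ^ p + v ^ p) := by
  have h2 : (0:ℝ) ≤ 2 ^ p := Real.rpow_nonneg (by norm_num) p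
  rcases le_total u v with h | h
  · calc (u+v)^p ≤ (2*v)^p := Real.rpow_le_rpow (by linarith) (by linarith) hp
      _ = 2^p * v^p := Real.mul_rpow (by norm_num) hv
      _ ≤ 2^p*(u^p+v^p) := by nlinarith [Real.rpow_nonneg hu p]
  · calc (u+v)^p ≤ (2*u)^p := Real.rpow_le_rpow (by linarith) (by linarith) hp
      _ = 2^p * u^p := Real.mul_rpow (by norm_num) hu
      _ ≤ 2^p*(u^p+v^p) := by nlinarith [Real.rpow_nonneg hv p]


lemma shifted_facts {e : ℝ} (he : -2 < e) (y : ℂ) (hy : ‖y‖ = 1) :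
    IntegrableOn (fun x : ℂ => ‖x - y‖ ^ e) (ball 0 1) ∧
      ∫ x in ball (0:ℂ) 1, ‖x - y‖ ^ e ≤ ∫ z in ball (0:ℂ) 2, ‖z‖ ^ e := by
  set G : ℂ → ℝ := (ball (0:ℂ) 2).indicator (fun z => ‖z‖ ^ e) with hG
  have hGint : Integrable G :=
    (integrable_indicator_iff measurableSet_ball).mpr (integrableOn_norm_rpow_ball he)
  have hGy : Integrable fun x => G (x - y) := hGint.comp_sub_right y
  have hmem : ∀ x ∈ ball (0:ℂ) 1, x - y ∈ ball (0:ℂ) 2 := by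
    intro x hx
    rw [mem_ball_zero_iff] at hx ⊢
    calc ‖x - y‖ ≤ ‖x‖ + ‖y‖ := norm_sub_le x y
      _ < 2 := by rw [hy]; linarith
  have hEq : Set.EqOn (fun x => G (x - y)) (fun x : ℂ => ‖x - y‖ ^ e) (ball 0 1) := by
    intro x hx
    simp only [hG, Set.indicator_of_mem (hmem x hx)]
  have hGnn : ∀ x, 0 ≤ G x := fun x =>
    Set.indicator_nonneg (fun z _ => Real.rpow_nonneg (norm_nonneg z) e) x
  constructor
  · exact (hGy.integrableOn).congr_fun hEq measurableSet_ball
  · calc ∫ x in ball (0:ℂ) 1, ‖x - y‖ ^ e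
        = ∫ x in ball (0:ℂ) 1, G (x - y) :=
          (setIntegral_congr_fun measurableSet_ball hEq).symm
      _ ≤ ∫ x, G (x - y) :=
          setIntegral_le_integral hGy (Filter.Eventually.of_forall fun x => hGnn _)
      _ = ∫ x, G x := integral_sub_right_eq_self G y
      _ = ∫ z in ball (0:ℂ) 2, ‖z‖ ^ e := integral_indicator measurableSet_ball

lemma pointwise_bound (a p : ℝ) (ha : 0 ≤ a) (hp : 0 < p) (y₁ y₂ x : ℂ)
    (hy₁ : ‖y₁‖ = 1) (hy₂ : ‖y₂‖ = 1) (hx : ‖x‖ < 1) :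
    (1 - ‖x‖) ^ a * |unitDiscPoissonKernel x y₁ - unitDiscPoissonKernel x y₂| ^ p ≤
      (2 / Real.pi) ^ p * ‖y₁ - y₂‖ ^ p *
        (‖x - y₁‖ ^ (a - 2*p) + ‖x - y₂‖ ^ (a - 2*p)) := by
  have hπ : (0:ℝ) < Real.pi := Real.pi_pos
  set ρ : ℝ := 1 - ‖x‖ with hρdef
  set r₁ : ℝ := ‖y₁ - x‖ with hr₁def
  set r₂ : ℝ := ‖y₂ - x‖ with hr₂def
  set d : ℝ := ‖y₁ - y₂‖ with hddef
  have hρ : 0 < ρ := by simp only [hρdef]; linarith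
  have hρ1 : ρ ≤ r₁ := by
    have := norm_sub_norm_le y₁ x
    simp only [hρdef, hr₁def]; rw [← hy₁]; linarith
  have hρ2 : ρ ≤ r₂ := by
    have := norm_sub_norm_le y₂ x
    simp only [hρdef, hr₂def]; rw [← hy₂]; linarith
  have hr₁ : 0 < r₁ := hρ.trans_le hρ1
  have hr₂ : 0 < r₂ := hρ.trans_le hρ2
  have hdnn : 0 ≤ d := norm_nonneg _
  have habs : |r₁ - r₂| ≤ d := by
    have h := abs_norm_sub_norm_le (y₁ - x) (y₂ - x)
    rw [sub_sub_sub_cancel_right] at h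
    exact h
  have hN : 0 ≤ 1 - ‖x‖^2 := by nlinarith [norm_nonneg x]
  have hN2 : 1 - ‖x‖^2 ≤ 2*ρ := by simp only [hρdef]; nlinarith [norm_nonneg x]
  -- step 1
  have hker : unitDiscPoissonKernel x y₁ - unitDiscPoissonKernel x y₂ =
      (1/(2*Real.pi)) * (1 - ‖x‖^2) * ((r₂^2 - r₁^2)/(r₁^2 * r₂^2)) := by
    unfold unitDiscPoissonKernel
    rw [← hr₁def, ← hr₂def]
    field_simp
  have hsq : |r₂^2 - r₁^2| ≤ d * (r₁ + r₂) := by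
    have h1 : r₂^2 - r₁^2 = (r₂ - r₁) * (r₂ + r₁) := by ring
    rw [h1, abs_mul, abs_of_pos (by linarith : (0:ℝ) < r₂ + r₁)]
    have h2 : |r₂ - r₁| ≤ d := by rwa [abs_sub_comm]
    nlinarith [abs_nonneg (r₂ - r₁)]
  have hstep1 : |unitDiscPoissonKernel x y₁ - unitDiscPoissonKernel x y₂| ≤
      (1/Real.pi) * ρ * d * (1/(r₁*r₂^2) + 1/(r₁^2*r₂)) := by
    have habs2 : |unitDiscPoissonKernel x y₁ - unitDiscPoissonKernel x y₂| =
        1/(2*Real.pi) * (1 - ‖x‖^2) * (|r₂^2 - r₁^2|/(r₁^2 * r₂^2)) := by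
      rw [hker, abs_mul, abs_mul, abs_div, abs_div, abs_one,
        abs_of_pos (by positivity : (0:ℝ) < 2*Real.pi), abs_of_nonneg hN,
        abs_of_pos (by positivity : (0:ℝ) < r₁^2 * r₂^2)]
    rw [habs2]
    have hrhs : (1/Real.pi) * ρ * d * (1/(r₁*r₂^2) + 1/(r₁^2*r₂)) =
        (1/(2*Real.pi)) * (2*ρ) * ((d*(r₁+r₂))/(r₁^2*r₂^2)) := by
      field_simp
    rw [hrhs]
    gcongr
  -- step 2 : raise to power p
  have hstep2 : |unitDiscPoissonKernel x y₁ - unitDiscPoissonKernel x y₂| ^ p ≤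
      ((1/Real.pi) * ρ * d * (1/(r₁*r₂^2) + 1/(r₁^2*r₂))) ^ p :=
    Real.rpow_le_rpow (abs_nonneg _) hstep1 hp.le
  -- expand the rpow of the product
  have hexp : ((1/Real.pi) * ρ * d * (1/(r₁*r₂^2) + 1/(r₁^2*r₂))) ^ p =
      (1/Real.pi)^p * ρ^p * d^p * (1/(r₁*r₂^2) + 1/(r₁^2*r₂))^p := by
    rw [Real.mul_rpow (by positivity) (by positivity),
        Real.mul_rpow (by positivity) hdnn,
        Real.mul_rpow (by positivity) hρ.le]
  have hsum : (1/(r₁*r₂^2) + 1/(r₁^2*r₂))^p ≤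
      2^p * ((1/(r₁*r₂^2))^p + (1/(r₁^2*r₂))^p) :=
    add_rpow_le' (by positivity) (by positivity) hp.le
  -- the two claims
  have hC1 : ρ^a * (ρ^p * (1/(r₁*r₂^2))^p) ≤ r₂ ^ (a - 2*p) := by
    have hS : (1/(r₁*r₂^2))^p = (r₁^p * r₂^(2*p))⁻¹ := by
      rw [one_div, Real.inv_rpow (by positivity), Real.mul_rpow hr₁.le (by positivity)]
      congr 2
      rw [← Real.rpow_natCast r₂ 2, ← Real.rpow_mul hr₂.le]
      norm_num
    rw [hS]
    have h1 : ρ^a ≤ r₂^a := Real.rpow_le_rpow hρ.le hρ2 ha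
    have h2 : ρ^p ≤ r₁^p := Real.rpow_le_rpow hρ.le hρ1 hp.le
    have hinv : (0:ℝ) ≤ (r₁^p * r₂^(2*p))⁻¹ := by positivity
    calc ρ^a * (ρ^p * (r₁^p * r₂^(2*p))⁻¹)
        ≤ r₂^a * (r₁^p * (r₁^p * r₂^(2*p))⁻¹) := by
          apply mul_le_mul h1 _ (by positivity) (Real.rpow_nonneg hr₂.le a)
          exact mul_le_mul_of_nonneg_right h2 hinv
      _ = r₂ ^ (a - 2*p) := by
          rw [Real.rpow_sub hr₂]
          field_simp
  have hC2 : ρ^a * (ρ^p * (1/(r₁^2*r₂))^p) ≤ r₁ ^ (a - 2*p) := by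
    have hS : (1/(r₁^2*r₂))^p = (r₁^(2*p) * r₂^p)⁻¹ := by
      rw [one_div, Real.inv_rpow (by positivity), Real.mul_rpow (by positivity) hr₂.le]
      congr 2
      rw [← Real.rpow_natCast r₁ 2, ← Real.rpow_mul hr₁.le]
      norm_num
    rw [hS]
    have h1 : ρ^a ≤ r₁^a := Real.rpow_le_rpow hρ.le hρ1 ha
    have h2 : ρ^p ≤ r₂^p := Real.rpow_le_rpow hρ.le hρ2 hp.le
    have hinv : (0:ℝ) ≤ (r₁^(2*p) * r₂^p)⁻¹ := by positivity
    calc ρ^a * (ρ^p * (r₁^(2*p) * r₂^p)⁻¹)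
        ≤ r₁^a * (r₂^p * (r₁^(2*p) * r₂^p)⁻¹) := by
          apply mul_le_mul h1 _ (by positivity) (Real.rpow_nonneg hr₁.le a)
          exact mul_le_mul_of_nonneg_right h2 hinv
      _ = r₁ ^ (a - 2*p) := by
          rw [Real.rpow_sub hr₁]
          field_simp
  -- put everything together
  have hnormswap₁ : ‖x - y₁‖ = r₁ := by rw [hr₁def, norm_sub_rev]
  have hnormswap₂ : ‖x - y₂‖ = r₂ := by rw [hr₂def, norm_sub_rev]
  rw [hnormswap₁, hnormswap₂]
  have hρa : (0:ℝ) ≤ ρ^a := Real.rpow_nonneg hρ.le a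
  calc ρ ^ a * |unitDiscPoissonKernel x y₁ - unitDiscPoissonKernel x y₂| ^ p
      ≤ ρ ^ a * ((1/Real.pi)^p * ρ^p * d^p *
          (2^p * ((1/(r₁*r₂^2))^p + (1/(r₁^2*r₂))^p))) := by
        refine mul_le_mul_of_nonneg_left ?_ hρa
        refine hstep2.trans ?_
        rw [hexp]
        exact mul_le_mul_of_nonneg_left hsum
          (mul_nonneg (mul_nonneg (Real.rpow_nonneg (by positivity) p)
            (Real.rpow_nonneg hρ.le p)) (Real.rpow_nonneg hdnn p))
    _ = (2/Real.pi)^p * d^p *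
          (ρ^a * (ρ^p * (1/(r₁*r₂^2))^p) + ρ^a * (ρ^p * (1/(r₁^2*r₂))^p)) := by
        rw [show (2/Real.pi) = 2 * (1/Real.pi) by ring,
          Real.mul_rpow (by norm_num) (by positivity)]
        ring
    _ ≤ (2/Real.pi)^p * d^p * (r₂ ^ (a - 2*p) + r₁ ^ (a - 2*p)) := by
        refine mul_le_mul_of_nonneg_left ?_ (by positivity)
        exact add_le_add hC1 hC2
    _ = (2/Real.pi)^p * d^p * (r₁ ^ (a - 2*p) + r₂ ^ (a - 2*p)) := by ring

/-- Lemma 4.1(a), case `0 < p < (2+a)/2`: there is `c = c(p,a)` such that for all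
`y₁, y₂` on the unit circle,
`∫_{D₀} (1 − |x|)^a·|P₀(x,y₁) − P₀(x,y₂)|^p dx ≤ c·|y₁ − y₂|^p`. -/
theorem integral_abs_poissonKernel_sub_rpow_le_of_lt (a p : ℝ) (ha : 0 ≤ a)
    (hp : 0 < p) (hpa : p < (2 + a) / 2) :
    ∃ c : ℝ, 0 < c ∧ ∀ y₁ y₂ : ℂ, ‖y₁‖ = 1 → ‖y₂‖ = 1 →
      ∫ x in Metric.ball (0 : ℂ) 1,
          (1 - ‖x‖) ^ a * |unitDiscPoissonKernel x y₁ - unitDiscPoissonKernel x y₂| ^ p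
        ≤ c * ‖y₁ - y₂‖ ^ p := by
  have hπ : (0:ℝ) < Real.pi := Real.pi_pos
  set e : ℝ := a - 2*p with he_def
  have he : -2 < e := by simp only [he_def]; linarith
  set K : ℝ := ∫ z in ball (0:ℂ) 2, ‖z‖ ^ e with hK_def
  have hK0 : 0 ≤ K :=
    setIntegral_nonneg measurableSet_ball fun z _ => Real.rpow_nonneg (norm_nonneg z) e
  set C₁ : ℝ := (2 / Real.pi) ^ p with hC₁_def
  have hC₁0 : 0 ≤ C₁ := Real.rpow_nonneg (by positivity) p
  refine ⟨C₁ * (2 * K) + 1, by positivity, fun y₁ y₂ hy₁ hy₂ => ?_⟩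
  set d : ℝ := ‖y₁ - y₂‖ with hd_def
  have hdnn : 0 ≤ d := norm_nonneg _
  have hdp : 0 ≤ d ^ p := Real.rpow_nonneg hdnn p
  obtain ⟨hint1, hbnd1⟩ := shifted_facts he y₁ hy₁
  obtain ⟨hint2, hbnd2⟩ := shifted_facts he y₂ hy₂
  have hgint : IntegrableOn
      (fun x : ℂ => C₁ * d ^ p * (‖x - y₁‖ ^ e + ‖x - y₂‖ ^ e)) (ball 0 1) :=
    (hint1.add hint2).const_mul _
  calc ∫ x in ball (0:ℂ) 1,
          (1 - ‖x‖) ^ a * |unitDiscPoissonKernel x y₁ - unitDiscPoissonKernel x y₂| ^ p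
      ≤ ∫ x in ball (0:ℂ) 1, C₁ * d ^ p * (‖x - y₁‖ ^ e + ‖x - y₂‖ ^ e) := by
        refine integral_mono_of_nonneg ?_ hgint ?_
        · filter_upwards [ae_restrict_mem measurableSet_ball] with x hx
          rw [mem_ball_zero_iff] at hx
          have h1 : (0:ℝ) ≤ (1 - ‖x‖) ^ a := Real.rpow_nonneg (by linarith) a
          have h2 : (0:ℝ) ≤ |unitDiscPoissonKernel x y₁ - unitDiscPoissonKernel x y₂| ^ p :=
            Real.rpow_nonneg (abs_nonneg _) p
          positivity
        · filter_upwards [ae_restrict_mem measurableSet_ball] with x hx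
          rw [mem_ball_zero_iff] at hx
          exact pointwise_bound a p ha hp y₁ y₂ x hy₁ hy₂ hx
    _ = C₁ * d ^ p *
          ((∫ x in ball (0:ℂ) 1, ‖x - y₁‖ ^ e) + ∫ x in ball (0:ℂ) 1, ‖x - y₂‖ ^ e) := by
        rw [integral_const_mul, integral_add hint1 hint2]
    _ ≤ C₁ * d ^ p * (K + K) := by
        refine mul_le_mul_of_nonneg_left (add_le_add hbnd1 hbnd2) (by positivity)
    _ ≤ (C₁ * (2 * K) + 1) * d ^ p := by nlinarith
end

section
/- Let a ≥ 0 and (2+a)/2 < p < 2 + a. There exists a constant c = c(p,a) such that for all y₁, y₂ on the unit circle ∂D₀, ∫_{D₀} (1 − |x|)^a · |P₀(x,y₁) − P₀(x,y₂)|^p dx ≤ c·|y₁ − y₂|^{2+a−p}. -/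
open MeasureTheory Set Metric
open scoped ENNReal

namespace PoissonKernelAux

lemma lintegral_radial_complex (f : ℝ → ℝ) (hm : Measurable f) :
    ∫⁻ x : ℂ, ENNReal.ofReal (f ‖x‖) =
      (volume : Measure ℂ).toSphere univ * ∫⁻ y in Ioi (0 : ℝ), ENNReal.ofReal (y * f y) := by
  have h0 : (volume : Measure ℂ).restrict ({(0 : ℂ)}ᶜ) = volume :=
    MeasureTheory.restrict_compl_singleton _
  have step1 : ∫⁻ x : ℂ, ENNReal.ofReal (f ‖x‖) =
      ∫⁻ x : ({(0 : ℂ)}ᶜ : Set ℂ), ENNReal.ofReal (f ‖x.1‖)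
        ∂((volume : Measure ℂ).comap Subtype.val) := by
    rw [lintegral_subtype_comap (measurableSet_singleton (0:ℂ)).compl
      (fun x : ℂ => ENNReal.ofReal (f ‖x‖)), h0]
  have step2 : ∫⁻ x : ({(0 : ℂ)}ᶜ : Set ℂ), ENNReal.ofReal (f ‖x.1‖)
        ∂((volume : Measure ℂ).comap Subtype.val) =
      ∫⁻ p : sphere (0 : ℂ) 1 × Ioi (0 : ℝ), ENNReal.ofReal (f p.2.1)
        ∂((volume : Measure ℂ).toSphere.prod
          (Measure.volumeIoiPow (Module.finrank ℝ ℂ - 1))) :=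
    by simpa only [homeomorphUnitSphereProd_apply_snd_coe] using
      ((volume : Measure ℂ).measurePreserving_homeomorphUnitSphereProd).lintegral_comp_emb
        (Homeomorph.measurableEmbedding _) (fun p => ENNReal.ofReal (f p.2.1))
  have step3 : ∫⁻ p : sphere (0 : ℂ) 1 × Ioi (0 : ℝ), ENNReal.ofReal (f p.2.1)
        ∂((volume : Measure ℂ).toSphere.prod
          (Measure.volumeIoiPow (Module.finrank ℝ ℂ - 1))) =
      (volume : Measure ℂ).toSphere univ *
        ∫⁻ y : Ioi (0 : ℝ), ENNReal.ofReal (f y.1)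
          ∂(Measure.volumeIoiPow (Module.finrank ℝ ℂ - 1)) := by
    rw [MeasureTheory.lintegral_prod (fun p : sphere (0:ℂ) 1 × Ioi (0:ℝ) => ENNReal.ofReal (f p.2.1))
      ((hm.comp (measurable_subtype_coe.comp measurable_snd)).ennreal_ofReal.aemeasurable)]
    simp [lintegral_const, mul_comm]
  have step4 : (∫⁻ y : Ioi (0 : ℝ), ENNReal.ofReal (f y.1)
          ∂(Measure.volumeIoiPow (Module.finrank ℝ ℂ - 1))) =
      ∫⁻ y in Ioi (0 : ℝ), ENNReal.ofReal (y * f y) := by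
    rw [Measure.volumeIoiPow,
      lintegral_withDensity_eq_lintegral_mul _
        (f := fun r : Ioi (0:ℝ) => ENNReal.ofReal (r.1 ^ (Module.finrank ℝ ℂ - 1)))
        ((measurable_subtype_coe.pow_const _).ennreal_ofReal)
        (g := fun y : Ioi (0:ℝ) => ENNReal.ofReal (f y.1))
        ((hm.comp measurable_subtype_coe).ennreal_ofReal)]
    have : ((fun r : Ioi (0:ℝ) => ENNReal.ofReal (r.1 ^ (Module.finrank ℝ ℂ - 1))) *
        (fun y : Ioi (0:ℝ) => ENNReal.ofReal (f y.1))) =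
        fun y : Ioi (0:ℝ) =>
          (fun t : ℝ => ENNReal.ofReal (t ^ (Module.finrank ℝ ℂ - 1)) * ENNReal.ofReal (f t)) y.1 :=
      rfl
    rw [this, lintegral_subtype_comap measurableSet_Ioi]
    refine setLIntegral_congr_fun measurableSet_Ioi (fun y hy => ?_)
    rw [Complex.finrank_real_complex]
    norm_num
    rw [← ENNReal.ofReal_mul (le_of_lt hy)]
  rw [step1, step2, step3, step4]

lemma integrable_radial_complex (f : ℝ → ℝ) (hm : Measurable f) (h0 : ∀ y, 0 ≤ f y)
    (hfin : ∫⁻ y in Ioi (0 : ℝ), ENNReal.ofReal (y * f y) ≠ ∞) :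
    Integrable (fun x : ℂ => f ‖x‖) := by
  refine ⟨(hm.comp measurable_norm).aestronglyMeasurable, ?_⟩
  rw [HasFiniteIntegral]
  have : ∀ x : ℂ, ‖f ‖x‖‖ₑ = ENNReal.ofReal (f ‖x‖) := fun x =>
    Real.enorm_eq_ofReal (h0 _)
  rw [lintegral_congr this, lintegral_radial_complex f hm]
  exact ENNReal.mul_lt_top (measure_ne_top _ _).lt_top hfin.lt_top

lemma G1_integrable (a p : ℝ) (hpa : (2 + a) / 2 < p) (hpa' : p < 2 + a) :
    Integrable (fun z : ℂ => min (‖z‖ ^ (a - p)) (‖z‖ ^ (a - 2 * p))) := by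
  have hm : Measurable (fun y : ℝ => min (|y| ^ (a - p)) (|y| ^ (a - 2 * p))) := by
    fun_prop
  have h0 : ∀ y : ℝ, 0 ≤ min (|y| ^ (a - p)) (|y| ^ (a - 2 * p)) :=
    fun y => le_min (Real.rpow_nonneg (abs_nonneg y) _) (Real.rpow_nonneg (abs_nonneg y) _)
  have hfin : ∫⁻ y in Ioi (0 : ℝ),
      ENNReal.ofReal (y * min (|y| ^ (a - p)) (|y| ^ (a - 2 * p))) ≠ ∞ := by
    have hsub := lintegral_mono_set (μ := volume)
      (f := fun y : ℝ => ENNReal.ofReal (y * min (|y| ^ (a - p)) (|y| ^ (a - 2 * p))))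
      (Ioi_subset_Ioc_union_Ioi (a := (0:ℝ)) (b := 1))
    have hunion := lintegral_union_le (μ := volume)
      (f := fun y : ℝ => ENNReal.ofReal (y * min (|y| ^ (a - p)) (|y| ^ (a - 2 * p))))
      (Ioc (0:ℝ) 1) (Ioi (1:ℝ))
    have h1 : ∫⁻ y in Ioc (0:ℝ) 1,
        ENNReal.ofReal (y * min (|y| ^ (a - p)) (|y| ^ (a - 2 * p))) < ∞ := by
      have hint : IntegrableOn (fun t : ℝ => t ^ (1 + (a - p))) (Ioc (0:ℝ) 1) :=
        (intervalIntegrable_iff_integrableOn_Ioc_of_le zero_le_one).1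
          (intervalIntegral.intervalIntegrable_rpow' (by linarith))
      refine lt_of_le_of_lt (setLIntegral_mono' measurableSet_Ioc fun y hy => ?_) hint.2
      have hya : |y| = y := abs_of_pos hy.1
      have : y * min (|y| ^ (a - p)) (|y| ^ (a - 2 * p)) ≤ y ^ (1 + (a - p)) := by
        rw [Real.rpow_add hy.1, Real.rpow_one, hya]
        exact mul_le_mul_of_nonneg_left (min_le_left _ _) hy.1.le
      exact le_trans (ENNReal.ofReal_le_ofReal this) (Real.ofReal_le_enorm _)
    have h2 : ∫⁻ y in Ioi (1:ℝ),
        ENNReal.ofReal (y * min (|y| ^ (a - p)) (|y| ^ (a - 2 * p))) < ∞ := by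
      have hint : IntegrableOn (fun t : ℝ => t ^ (1 + (a - 2 * p))) (Ioi (1:ℝ)) :=
        integrableOn_Ioi_rpow_of_lt (by linarith) one_pos
      refine lt_of_le_of_lt (setLIntegral_mono' measurableSet_Ioi fun y hy => ?_) hint.2
      have hy0 : (0:ℝ) < y := lt_trans one_pos hy
      have hya : |y| = y := abs_of_pos hy0
      have : y * min (|y| ^ (a - p)) (|y| ^ (a - 2 * p)) ≤ y ^ (1 + (a - 2 * p)) := by
        rw [Real.rpow_add hy0, Real.rpow_one, hya]
        exact mul_le_mul_of_nonneg_left (min_le_right _ _) hy0.le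
      exact le_trans (ENNReal.ofReal_le_ofReal this) (Real.ofReal_le_enorm _)
    exact (lt_of_le_of_lt (le_trans hsub hunion) (ENNReal.add_lt_top.2 ⟨h1, h2⟩)).ne
  have := integrable_radial_complex _ hm h0 hfin
  simpa using this

lemma aux_A {t d₁ d₂ c₀ : ℝ} (hc₀ : 0 < c₀) (hd₁ : 0 < d₁) (h12 : d₁ ≤ d₂)
    (ht0 : 0 ≤ t) (ht1 : t ≤ 2 * d₁) (ht2 : t ≤ 2 * d₂) :
    |c₀ * t / d₁ ^ 2 - c₀ * t / d₂ ^ 2| ≤ 4 * c₀ * d₁⁻¹ := by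
  have hd₂ : 0 < d₂ := lt_of_lt_of_le hd₁ h12
  have hub₁ : c₀ * t / d₁ ^ 2 ≤ 2 * c₀ / d₁ := by
    rw [div_le_div_iff₀ (by positivity) hd₁]
    nlinarith [mul_le_mul_of_nonneg_left ht1 (mul_pos hc₀ hd₁).le]
  have hub₂ : c₀ * t / d₂ ^ 2 ≤ 2 * c₀ / d₁ := by
    rw [div_le_div_iff₀ (by positivity) hd₁]; nlinarith [mul_le_mul ht2 h12 hd₁.le (by linarith)]
  have h01 : 0 ≤ c₀ * t / d₁ ^ 2 := by positivity
  have h02 : 0 ≤ c₀ * t / d₂ ^ 2 := by positivity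
  have h4 : 2 * c₀ / d₁ ≤ 4 * c₀ * d₁⁻¹ := by
    rw [div_eq_mul_inv]
    have : (0:ℝ) ≤ d₁⁻¹ := by positivity
    nlinarith
  rw [abs_le]
  constructor <;> linarith

lemma aux_B {t d₁ d₂ δ c₀ : ℝ} (hc₀ : 0 < c₀) (hd₁ : 0 < d₁) (h12 : d₁ ≤ d₂)
    (hδ : d₂ ≤ d₁ + δ) (ht0 : 0 ≤ t) (ht1 : t ≤ 2 * d₁) :
    |c₀ * t / d₁ ^ 2 - c₀ * t / d₂ ^ 2| ≤ 4 * c₀ * (δ * d₁⁻¹ * d₁⁻¹) := by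
  have hd₂ : 0 < d₂ := lt_of_lt_of_le hd₁ h12
  have hnn : c₀ * t / d₂ ^ 2 ≤ c₀ * t / d₁ ^ 2 := by
    apply div_le_div_of_nonneg_left (by positivity) (by positivity)
    nlinarith
  rw [abs_of_nonneg (by linarith)]
  have key : c₀ * t / d₁ ^ 2 - c₀ * t / d₂ ^ 2 ≤ 4 * c₀ * δ / d₁ ^ 2 := by
    rw [div_sub_div _ _ (by positivity) (by positivity),
      div_le_div_iff₀ (by positivity) (by positivity)]
    have hδ0 : 0 ≤ δ := by linarith
    have h5 : t * ((d₂ - d₁) * (d₂ + d₁)) ≤ 2 * d₁ * (δ * (2 * d₂)) :=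
      mul_le_mul ht1 (by nlinarith) (by nlinarith) (by linarith)
    have h6 : t * ((d₂ - d₁) * (d₂ + d₁)) ≤ 4 * δ * d₂ ^ 2 := by
      nlinarith [mul_nonneg (mul_nonneg hδ0 hd₂.le) (sub_nonneg.2 h12)]
    nlinarith [mul_le_mul_of_nonneg_left h6 (show (0:ℝ) ≤ c₀ * d₁ ^ 2 by positivity)]
  calc c₀ * t / d₁ ^ 2 - c₀ * t / d₂ ^ 2 ≤ 4 * c₀ * δ / d₁ ^ 2 := key
    _ = 4 * c₀ * (δ * d₁⁻¹ * d₁⁻¹) := by rw [div_eq_mul_inv, pow_two, mul_inv]; ring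

lemma key_est {x y₁ y₂ : ℂ} (hx : ‖x‖ < 1) (h1 : ‖y₁‖ = 1) (h2 : ‖y₂‖ = 1)
    (hle : ‖y₁ - x‖ ≤ ‖y₂ - x‖) :
    |unitDiscPoissonKernel x y₁ - unitDiscPoissonKernel x y₂| ≤
      4 * (1 / (2 * Real.pi)) *
        min (‖y₁ - x‖⁻¹) (‖y₁ - y₂‖ * ‖y₁ - x‖⁻¹ * ‖y₁ - x‖⁻¹) := by
  have hπ : 0 < Real.pi := Real.pi_pos
  have hc₀ : 0 < 1 / (2 * Real.pi) := by positivity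
  have hx0 : 0 ≤ ‖x‖ := norm_nonneg x
  have h1x1 : 1 - ‖x‖ ≤ ‖y₁ - x‖ := by
    have := norm_sub_norm_le y₁ x; rw [h1] at this; linarith
  have hd₁ : 0 < ‖y₁ - x‖ := by linarith
  have ht0 : 0 ≤ 1 - ‖x‖ ^ 2 := by nlinarith
  have ht1 : 1 - ‖x‖ ^ 2 ≤ 2 * ‖y₁ - x‖ := by nlinarith
  have h1x2 : 1 - ‖x‖ ≤ ‖y₂ - x‖ := by
    have := norm_sub_norm_le y₂ x; rw [h2] at this; linarith
  have ht2 : 1 - ‖x‖ ^ 2 ≤ 2 * ‖y₂ - x‖ := by nlinarith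
  have hδ : ‖y₂ - x‖ ≤ ‖y₁ - x‖ + ‖y₁ - y₂‖ := by
    have hh : y₂ - x = (y₁ - x) - (y₁ - y₂) := by ring
    rw [hh]
    exact norm_sub_le _ _
  rw [mul_min_of_nonneg _ _ (by positivity : (0:ℝ) ≤ 4 * (1 / (2 * Real.pi)))]
  exact le_min (aux_A hc₀ hd₁ hle ht0 ht1 ht2) (aux_B hc₀ hd₁ hle hδ ht0 ht1)

lemma min_rpow {u v p : ℝ} (hu : 0 ≤ u) (hv : 0 ≤ v) (hp : 0 ≤ p) :
    min u v ^ p = min (u ^ p) (v ^ p) := by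
  rcases le_total u v with h | h
  · rw [min_eq_left h, min_eq_left (Real.rpow_le_rpow hu h hp)]
  · rw [min_eq_right h, min_eq_right (Real.rpow_le_rpow hv h hp)]

lemma pointwise_aux {a p : ℝ} (ha : 0 ≤ a) (hp : 0 ≤ p) {x y₁ y₂ : ℂ}
    (hx : ‖x‖ < 1) (h1 : ‖y₁‖ = 1) (h2 : ‖y₂‖ = 1) (hle : ‖y₁ - x‖ ≤ ‖y₂ - x‖) :
    (1 - ‖x‖) ^ a * |unitDiscPoissonKernel x y₁ - unitDiscPoissonKernel x y₂| ^ p ≤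
      (4 * (1 / (2 * Real.pi))) ^ p *
        min (‖y₁ - x‖ ^ (a - p)) (‖y₁ - y₂‖ ^ p * ‖y₁ - x‖ ^ (a - 2 * p)) := by
  have hπ : 0 < Real.pi := Real.pi_pos
  set d : ℝ := ‖y₁ - x‖ with hd_def
  set δ : ℝ := ‖y₁ - y₂‖ with hδ_def
  have hδ0 : 0 ≤ δ := norm_nonneg _
  have h1x1 : 1 - ‖x‖ ≤ d := by
    have := norm_sub_norm_le y₁ x; rw [h1] at this; linarith
  have hd : 0 < d := by linarith
  have hC₀ : (0:ℝ) ≤ 4 * (1 / (2 * Real.pi)) := by positivity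
  have s1 : (1 - ‖x‖) ^ a ≤ d ^ a := Real.rpow_le_rpow (by linarith) h1x1 ha
  have s2 : |unitDiscPoissonKernel x y₁ - unitDiscPoissonKernel x y₂| ^ p ≤
      (4 * (1 / (2 * Real.pi)) * min (d⁻¹) (δ * d⁻¹ * d⁻¹)) ^ p :=
    Real.rpow_le_rpow (abs_nonneg _) (key_est hx h1 h2 hle) hp
  have step : (1 - ‖x‖) ^ a * |unitDiscPoissonKernel x y₁ - unitDiscPoissonKernel x y₂| ^ p ≤
      d ^ a * (4 * (1 / (2 * Real.pi)) * min (d⁻¹) (δ * d⁻¹ * d⁻¹)) ^ p :=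
    mul_le_mul s1 s2 (Real.rpow_nonneg (abs_nonneg _) _) (Real.rpow_nonneg hd.le _)
  refine le_trans step (le_of_eq ?_)
  have hdp : (0:ℝ) < d ^ p := Real.rpow_pos_of_pos hd p
  rw [Real.mul_rpow hC₀ (le_min (by positivity) (by positivity)),
    min_rpow (by positivity) (by positivity) hp, mul_left_comm]
  congr 1
  rw [mul_min_of_nonneg _ _ (Real.rpow_nonneg hd.le a)]
  congr 1
  · rw [Real.inv_rpow hd.le, ← div_eq_mul_inv, ← Real.rpow_sub hd]
  · rw [Real.mul_rpow (mul_nonneg hδ0 (inv_nonneg.2 hd.le)) (inv_nonneg.2 hd.le),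
      Real.mul_rpow hδ0 (inv_nonneg.2 hd.le), Real.inv_rpow hd.le]
    have e : d ^ a * (δ ^ p * (d ^ p)⁻¹ * (d ^ p)⁻¹) = δ ^ p * (d ^ a / d ^ p / d ^ p) := by
      ring
    rw [e, ← Real.rpow_sub hd, ← Real.rpow_sub hd, show a - p - p = a - 2 * p by ring]

lemma pointwise_bound {a p : ℝ} (ha : 0 ≤ a) (hp : 0 ≤ p) {x y₁ y₂ : ℂ}
    (hx : ‖x‖ < 1) (h1 : ‖y₁‖ = 1) (h2 : ‖y₂‖ = 1) :
    (1 - ‖x‖) ^ a * |unitDiscPoissonKernel x y₁ - unitDiscPoissonKernel x y₂| ^ p ≤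
      (4 * (1 / (2 * Real.pi))) ^ p *
        (min (‖x - y₁‖ ^ (a - p)) (‖y₁ - y₂‖ ^ p * ‖x - y₁‖ ^ (a - 2 * p)) +
         min (‖x - y₂‖ ^ (a - p)) (‖y₁ - y₂‖ ^ p * ‖x - y₂‖ ^ (a - 2 * p))) := by
  have hC : (0:ℝ) ≤ (4 * (1 / (2 * Real.pi))) ^ p :=
    Real.rpow_nonneg (by positivity) p
  have hG1 : (0:ℝ) ≤ min (‖x - y₁‖ ^ (a - p)) (‖y₁ - y₂‖ ^ p * ‖x - y₁‖ ^ (a - 2 * p)) :=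
    le_min (Real.rpow_nonneg (norm_nonneg _) _)
      (mul_nonneg (Real.rpow_nonneg (norm_nonneg _) _) (Real.rpow_nonneg (norm_nonneg _) _))
  have hG2 : (0:ℝ) ≤ min (‖x - y₂‖ ^ (a - p)) (‖y₁ - y₂‖ ^ p * ‖x - y₂‖ ^ (a - 2 * p)) :=
    le_min (Real.rpow_nonneg (norm_nonneg _) _)
      (mul_nonneg (Real.rpow_nonneg (norm_nonneg _) _) (Real.rpow_nonneg (norm_nonneg _) _))
  rcases le_total ‖y₁ - x‖ ‖y₂ - x‖ with h | h
  · refine le_trans (pointwise_aux ha hp hx h1 h2 h) ?_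
    rw [norm_sub_rev y₁ x]
    exact mul_le_mul_of_nonneg_left (le_add_of_nonneg_right hG2) hC
  · have hb := pointwise_aux ha hp hx h2 h1 h
    rw [abs_sub_comm (unitDiscPoissonKernel x y₂) (unitDiscPoissonKernel x y₁),
      norm_sub_rev y₂ y₁, norm_sub_rev y₂ x] at hb
    refine le_trans hb ?_
    exact mul_le_mul_of_nonneg_left (le_add_of_nonneg_left hG1) hC

end PoissonKernelAux

open PoissonKernelAux in
/-- Lemma 4.1(a), case `(2+a)/2 < p < 2+a`: there is `c = c(p,a)` such that for all
`y₁, y₂` on the unit circle,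
`∫_{D₀} (1 − |x|)^a·|P₀(x,y₁) − P₀(x,y₂)|^p dx ≤ c·|y₁ − y₂|^{2+a−p}`. -/
theorem integral_abs_poissonKernel_sub_rpow_le_of_gt (a p : ℝ) (ha : 0 ≤ a)
    (hpa : (2 + a) / 2 < p) (hpa' : p < 2 + a) :
    ∃ c : ℝ, 0 < c ∧ ∀ y₁ y₂ : ℂ, ‖y₁‖ = 1 → ‖y₂‖ = 1 →
      ∫ x in Metric.ball (0 : ℂ) 1,
          (1 - ‖x‖) ^ a * |unitDiscPoissonKernel x y₁ - unitDiscPoissonKernel x y₂| ^ p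
        ≤ c * ‖y₁ - y₂‖ ^ (2 + a - p) := by
  have hπ : 0 < Real.pi := Real.pi_pos
  have hp0 : 0 < p := by linarith
  set I : ℝ := ∫ z : ℂ, min (‖z‖ ^ (a - p)) (‖z‖ ^ (a - 2 * p)) with hI_def
  have hI0 : 0 ≤ I := integral_nonneg fun z =>
    le_min (Real.rpow_nonneg (norm_nonneg _) _) (Real.rpow_nonneg (norm_nonneg _) _)
  have hC : (0:ℝ) ≤ (4 * (1 / (2 * Real.pi))) ^ p := Real.rpow_nonneg (by positivity) p
  refine ⟨(4 * (1 / (2 * Real.pi))) ^ p * (2 * I) + 1, by nlinarith, ?_⟩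
  intro y₁ y₂ h1 h2
  by_cases hyy : y₁ = y₂
  · subst hyy
    simp only [sub_self, abs_zero, norm_zero]
    rw [Real.zero_rpow hp0.ne', Real.zero_rpow (by linarith : 2 + a - p ≠ 0)]
    simp
  · have hδ : 0 < ‖y₁ - y₂‖ := norm_sub_pos_iff.2 hyy
    set δ : ℝ := ‖y₁ - y₂‖ with hδ_def
    set G : ℂ → ℝ := fun z => δ ^ (a - p) * min (‖δ⁻¹ • z‖ ^ (a - p)) (‖δ⁻¹ • z‖ ^ (a - 2 * p))
      with hG_def
    have hG_nonneg : ∀ z, 0 ≤ G z := fun z => mul_nonneg (Real.rpow_nonneg hδ.le _)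
      (le_min (Real.rpow_nonneg (norm_nonneg _) _) (Real.rpow_nonneg (norm_nonneg _) _))
    have hGint : Integrable G := by
      have h₁ : Integrable (fun z : ℂ => min (‖δ⁻¹ • z‖ ^ (a - p)) (‖δ⁻¹ • z‖ ^ (a - 2 * p))) :=
        (integrable_comp_smul_iff volume
          (fun z : ℂ => min (‖z‖ ^ (a - p)) (‖z‖ ^ (a - 2 * p))) (inv_ne_zero hδ.ne')).2
          (G1_integrable a p hpa hpa')
      exact h₁.const_mul _
    have hGval : ∫ z : ℂ, G z = δ ^ (2 + a - p) * I := by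
      rw [hG_def]
      rw [MeasureTheory.integral_const_mul (δ ^ (a - p))
        (fun z : ℂ => min (‖δ⁻¹ • z‖ ^ (a - p)) (‖δ⁻¹ • z‖ ^ (a - 2 * p)))]
      rw [show (fun z : ℂ => min (‖δ⁻¹ • z‖ ^ (a - p)) (‖δ⁻¹ • z‖ ^ (a - 2 * p))) =
        (fun z : ℂ => (fun w : ℂ => min (‖w‖ ^ (a - p)) (‖w‖ ^ (a - 2 * p))) (δ⁻¹ • z)) from rfl]
      rw [Measure.integral_comp_smul volume
        (fun w : ℂ => min (‖w‖ ^ (a - p)) (‖w‖ ^ (a - 2 * p))) δ⁻¹]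
      rw [Complex.finrank_real_complex]
      have habs : |(((δ:ℝ)⁻¹) ^ 2)⁻¹| = δ ^ 2 := by
        rw [← inv_pow, inv_inv, abs_of_nonneg (by positivity)]
      rw [habs, smul_eq_mul, ← mul_assoc, ← hI_def]
      congr 1
      rw [← Real.rpow_natCast δ 2, ← Real.rpow_add hδ]
      congr 1
      push_cast
      ring
    have hGform : ∀ z : ℂ, G z = min (‖z‖ ^ (a - p)) (δ ^ p * ‖z‖ ^ (a - 2 * p)) := by
      intro z
      simp only [hG_def]
      have hnz : ‖δ⁻¹ • z‖ = δ⁻¹ * ‖z‖ := by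
        rw [norm_smul, norm_inv, Real.norm_eq_abs, abs_of_pos hδ]
      rw [hnz, mul_min_of_nonneg _ _ (Real.rpow_nonneg hδ.le (a - p))]
      congr 1
      · rw [Real.mul_rpow (inv_nonneg.2 hδ.le) (norm_nonneg z), ← mul_assoc,
          ← Real.mul_rpow hδ.le (inv_nonneg.2 hδ.le), mul_inv_cancel₀ hδ.ne',
          Real.one_rpow, one_mul]
      · rw [Real.mul_rpow (inv_nonneg.2 hδ.le) (norm_nonneg z), Real.inv_rpow hδ.le,
          ← Real.rpow_neg hδ.le, ← mul_assoc, ← Real.rpow_add hδ,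
          show a - p + -(a - 2 * p) = p by ring]
    have hdom_int : Integrable
        (fun x : ℂ => (4 * (1 / (2 * Real.pi))) ^ p * (G (x - y₁) + G (x - y₂))) :=
      ((hGint.comp_sub_right y₁).add (hGint.comp_sub_right y₂)).const_mul _
    have hdom_nonneg : ∀ x : ℂ,
        0 ≤ (4 * (1 / (2 * Real.pi))) ^ p * (G (x - y₁) + G (x - y₂)) := fun x =>
      mul_nonneg hC (add_nonneg (hG_nonneg _) (hG_nonneg _))
    calc ∫ x in Metric.ball (0 : ℂ) 1,
          (1 - ‖x‖) ^ a * |unitDiscPoissonKernel x y₁ - unitDiscPoissonKernel x y₂| ^ p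
        ≤ ∫ x in Metric.ball (0 : ℂ) 1,
            (4 * (1 / (2 * Real.pi))) ^ p * (G (x - y₁) + G (x - y₂)) := by
          refine integral_mono_of_nonneg ?_ hdom_int.integrableOn ?_
          · filter_upwards [ae_restrict_mem measurableSet_ball] with x hx
            have hx1 : ‖x‖ < 1 := mem_ball_zero_iff.1 hx
            exact mul_nonneg (Real.rpow_nonneg (by linarith) _)
              (Real.rpow_nonneg (abs_nonneg _) _)
          · filter_upwards [ae_restrict_mem measurableSet_ball] with x hx
            have hx1 : ‖x‖ < 1 := mem_ball_zero_iff.1 hx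
            have hpb := pointwise_bound ha hp0.le hx1 h1 h2
            rw [hGform (x - y₁), hGform (x - y₂)]
            exact hpb
      _ ≤ ∫ x : ℂ, (4 * (1 / (2 * Real.pi))) ^ p * (G (x - y₁) + G (x - y₂)) :=
          setIntegral_le_integral hdom_int (ae_of_all _ hdom_nonneg)
      _ = (4 * (1 / (2 * Real.pi))) ^ p * ((∫ x : ℂ, G (x - y₁)) + ∫ x : ℂ, G (x - y₂)) := by
          rw [MeasureTheory.integral_const_mul, integral_add (hGint.comp_sub_right y₁)
            (hGint.comp_sub_right y₂)]
      _ = (4 * (1 / (2 * Real.pi))) ^ p * (2 * (δ ^ (2 + a - p) * I)) := by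
          rw [integral_sub_right_eq_self G y₁, integral_sub_right_eq_self G y₂, hGval]
          ring
      _ ≤ ((4 * (1 / (2 * Real.pi))) ^ p * (2 * I) + 1) * δ ^ (2 + a - p) := by
          have hE : 0 ≤ δ ^ (2 + a - p) := Real.rpow_nonneg hδ.le _
          nlinarith
end

section
/- Let d ≥ 2 and let B be the open unit ball of ℝ^d. There exists a constant C = C(d) such that for all 0 < ε ≤ δ and every x ∈ ℝ^d, the d-dimensional Lebesgue measure of the set {y ∈ B : 1 − |y| ≤ ε} ∩ B(x,δ) is at most C·ε·δ^{d−1}. -/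
open MeasureTheory
open scoped ENNReal Pointwise

set_option maxHeartbeats 1000000 in
/-- Volume estimate from the proof of Proposition 2.1, for the unit ball of `ℝ^d`:
there is `C = C(d)` such that for all `0 < ε ≤ δ` and every `x`, the Lebesgue measure of
`{y ∈ B : 1 − |y| ≤ ε} ∩ B(x,δ)` is at most `C·ε·δ^{d−1}`. -/
theorem volume_collar_inter_ball_le (d : ℕ) (hd : 2 ≤ d) :
    ∃ C : ℝ, 0 < C ∧ ∀ ε δ : ℝ, 0 < ε → ε ≤ δ → ∀ x : EuclideanSpace ℝ (Fin d),
      volume ({y : EuclideanSpace ℝ (Fin d) | ‖y‖ < 1 ∧ 1 - ‖y‖ ≤ ε} ∩ Metric.ball x δ)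
        ≤ ENNReal.ofReal (C * ε * δ ^ (d - 1)) := by
  classical
  obtain ⟨e, hde⟩ : ∃ e, d = e + 1 := ⟨d - 1, by omega⟩
  have hfr : Module.finrank ℝ (EuclideanSpace ℝ (Fin d)) = d := finrank_euclideanSpace_fin
  set V : ℝ≥0∞ := volume (Metric.ball (0 : EuclideanSpace ℝ (Fin d)) 1) with hVdef
  have hVlt : V < ⊤ := measure_ball_lt_top
  have hVpos : 0 < V := Metric.measure_ball_pos _ _ one_pos
  set ω : ℝ := V.toReal with hωdef
  have hωpos : 0 < ω := ENNReal.toReal_pos hVpos.ne' hVlt.ne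
  have hVeq : V = ENNReal.ofReal ω := (ENNReal.ofReal_toReal hVlt.ne).symm
  have hdpos : (0:ℝ) < d := by exact_mod_cast (by omega : 0 < d)
  have hd1 : (1:ℝ) ≤ d := by exact_mod_cast (by omega : 1 ≤ d)
  haveI : Nontrivial (EuclideanSpace ℝ (Fin d)) :=
    Module.nontrivial_of_finrank_pos (by rw [hfr]; omega)
  have hball : ∀ (z : EuclideanSpace ℝ (Fin d)) (r : ℝ), 0 ≤ r →
      volume (Metric.ball z r) = ENNReal.ofReal (r ^ d) * V := by
    intro z r hr
    rw [Measure.addHaar_ball volume z hr, hfr]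
  refine ⟨d * 6 ^ d * ω, by positivity, ?_⟩
  intro ε δ hε hεδ x
  have hδ : 0 < δ := lt_of_lt_of_le hε hεδ
  rw [show d - 1 = e from by omega]
  set A := {y : EuclideanSpace ℝ (Fin d) | ‖y‖ < 1 ∧ 1 - ‖y‖ ≤ ε} ∩ Metric.ball x δ with hAdef
  have hAmeas : MeasurableSet A := by
    apply MeasurableSet.inter
    · exact (measurableSet_lt measurable_norm measurable_const).inter
        (measurableSet_le (measurable_const.sub measurable_norm) measurable_const)
    · exact measurableSet_ball
  have hAfin : volume A < ⊤ :=
    lt_of_le_of_lt (measure_mono Set.inter_subset_right) measure_ball_lt_top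
  rcases le_or_gt (1/2 : ℝ) δ with h12 | h12
  · -- large δ : use the full collar
    have hsub : A ⊆ Metric.ball (0 : EuclideanSpace ℝ (Fin d)) 1 \
        Metric.ball 0 (1 - ε) := by
      rintro y ⟨⟨hy1, hy2⟩, -⟩
      refine ⟨mem_ball_zero_iff.mpr hy1, fun hy => ?_⟩
      rw [mem_ball_zero_iff] at hy
      linarith
    have hcollar : volume (Metric.ball (0 : EuclideanSpace ℝ (Fin d)) 1 \
        Metric.ball 0 (1 - ε)) ≤ ENNReal.ofReal (d * ε * ω) := by
      by_cases hε1 : ε ≤ 1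
      · have hdiff := measure_diff (μ := volume)
          (Metric.ball_subset_ball (by linarith : 1 - ε ≤ 1))
          measurableSet_ball.nullMeasurableSet
          (measure_ball_lt_top (x := (0 : EuclideanSpace ℝ (Fin d))) (r := 1 - ε)).ne
        rw [hdiff, hball _ 1 zero_le_one, hball _ (1 - ε) (by linarith), one_pow, ENNReal.ofReal_one, one_mul,
          hVeq, ← ENNReal.ofReal_mul (pow_nonneg (by linarith) d),
          ← ENNReal.ofReal_sub _ (mul_nonneg (pow_nonneg (by linarith) d) hωpos.le)]
        apply ENNReal.ofReal_le_ofReal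
        have hber : 1 + (d:ℝ) * (-ε) ≤ (1 + -ε) ^ d :=
          one_add_mul_le_pow (by linarith) d
        rw [(by ring : (1:ℝ) + -ε = 1 - ε)] at hber
        nlinarith
      · push_neg at hε1
        calc volume (Metric.ball (0 : EuclideanSpace ℝ (Fin d)) 1 \ Metric.ball 0 (1 - ε))
            ≤ V := measure_mono Set.diff_subset
          _ = ENNReal.ofReal ω := hVeq
          _ ≤ ENNReal.ofReal (d * ε * ω) := by
              apply ENNReal.ofReal_le_ofReal
              have h1 : (1:ℝ) ≤ d * ε := by nlinarith
              have h2 := mul_le_mul_of_nonneg_right h1 hωpos.le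
              linarith
    calc volume A ≤ ENNReal.ofReal (d * ε * ω) := le_trans (measure_mono hsub) hcollar
      _ ≤ ENNReal.ofReal (d * 6 ^ d * ω * ε * δ ^ e) := by
          apply ENNReal.ofReal_le_ofReal
          have hδe : ((1:ℝ)/2) ^ e ≤ δ ^ e := pow_le_pow_left₀ (by norm_num) h12 e
          have h6 : (1:ℝ) ≤ 6 ^ d * ((1/2) ^ e) := by
            have : (6:ℝ) ^ d * ((1/2) ^ e) = 6 * 3 ^ e := by
              rw [hde, pow_succ, mul_comm ((6:ℝ)^e) 6, mul_assoc, ← mul_pow]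
              norm_num
            rw [this]
            have h3e : (1:ℝ) ≤ 3 ^ e := one_le_pow₀ (by norm_num)
            linarith
          have h6' : (1:ℝ) ≤ 6 ^ d * δ ^ e := by
            calc (1:ℝ) ≤ 6 ^ d * ((1/2) ^ e) := h6
              _ ≤ 6 ^ d * δ ^ e := by
                  apply mul_le_mul_of_nonneg_left hδe (by positivity)
          calc (d:ℝ) * ε * ω = ((d:ℝ) * ε * ω) * 1 := by ring
            _ ≤ ((d:ℝ) * ε * ω) * (6 ^ d * δ ^ e) := by
                apply mul_le_mul_of_nonneg_left h6' (by positivity)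
            _ = (d:ℝ) * 6 ^ d * ω * ε * δ ^ e := by ring
  · -- small δ : multiscale argument
    rcases A.eq_empty_or_nonempty with hAe | ⟨y₀, hy₀⟩
    · rw [hAe, measure_empty]
      exact zero_le
    obtain ⟨⟨hy₀1, hy₀2⟩, hy₀b⟩ := hy₀
    have hdist : dist x y₀ < δ := by rw [dist_comm]; exact Metric.mem_ball.mp hy₀b
    have hx : ‖x‖ < 1 + δ := by
      have h1 : ‖x‖ ≤ ‖x - y₀‖ + ‖y₀‖ := by
        calc ‖x‖ = ‖(x - y₀) + y₀‖ := by rw [sub_add_cancel]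
          _ ≤ ‖x - y₀‖ + ‖y₀‖ := norm_add_le _ _
      rw [← dist_eq_norm] at h1
      linarith
    have hεhalf : ε < 1/2 := lt_of_le_of_lt hεδ h12
    set N := ⌊δ / ε⌋₊ with hNdef
    have hN1 : (N : ℝ) * ε ≤ δ := by
      have h := Nat.floor_le (le_of_lt (div_pos hδ hε))
      calc (N : ℝ) * ε ≤ (δ / ε) * ε := by
            apply mul_le_mul_of_nonneg_right h hε.le
        _ = δ := by field_simp
    have hN2 : δ < ((N : ℝ) + 1) * ε := by
      have h := Nat.lt_floor_add_one (δ / ε)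
      calc δ = (δ / ε) * ε := by field_simp
        _ < ((N : ℝ) + 1) * ε := by
            apply mul_lt_mul_of_pos_right h hε
    -- the rescaled copies
    set r : ℕ → ℝ := fun k => (1 - ε) ^ k with hrdef
    have hr_pos : ∀ k, 0 < r k := fun k => pow_pos (by linarith) k
    have hr_le_one : ∀ k, r k ≤ 1 := fun k => pow_le_one₀ (by linarith) (by linarith)
    have hber : ∀ k : ℕ, 1 - (k : ℝ) * ε ≤ r k := by
      intro k
      have h : 1 + (k : ℝ) * (-ε) ≤ (1 + -ε) ^ k :=
        one_add_mul_le_pow (by linarith) k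
      rw [(by ring : (1:ℝ) + -ε = 1 - ε)] at h
      simpa [hrdef] using (by linarith : 1 - (k:ℝ) * ε ≤ (1 - ε) ^ k)
    have hr_half : ∀ k ≤ N, (1:ℝ)/2 ≤ r k := by
      intro k hk
      have hkN : (k : ℝ) ≤ (N : ℝ) := by exact_mod_cast hk
      have hkε : (k : ℝ) * ε ≤ δ :=
        le_trans (mul_le_mul_of_nonneg_right hkN hε.le) hN1
      have := hber k
      linarith
    set E : ℕ → Set (EuclideanSpace ℝ (Fin d)) := fun k => r k • A with hEdef
    have hEmeas : ∀ k, MeasurableSet (E k) := fun k => hAmeas.const_smul₀ (r k)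
    have hEshell : ∀ k, E k ⊆ {y | r (k+1) ≤ ‖y‖ ∧ ‖y‖ < r k} := by
      intro k y hy
      obtain ⟨a, ha, rfl⟩ := hy
      obtain ⟨⟨ha1, ha2⟩, -⟩ := ha
      have hnorm : ‖r k • a‖ = r k * ‖a‖ := by
        rw [norm_smul, Real.norm_eq_abs, abs_of_pos (hr_pos k)]
      constructor
      · show r (k+1) ≤ ‖r k • a‖
        rw [hnorm]
        have : r (k+1) = r k * (1 - ε) := by
          simp only [hrdef, pow_succ]
        rw [this]
        apply mul_le_mul_of_nonneg_left (by linarith) (hr_pos k).le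
      · show ‖r k • a‖ < r k
        rw [hnorm]
        calc r k * ‖a‖ < r k * 1 := by
              apply mul_lt_mul_of_pos_left ha1 (hr_pos k)
          _ = r k := mul_one _
    have hEball : ∀ k ≤ N, E k ⊆ Metric.ball x (3 * δ) := by
      intro k hk y hy
      obtain ⟨a, ha, rfl⟩ := hy
      obtain ⟨-, hab⟩ := ha
      have hab' : dist a x < δ := Metric.mem_ball.mp hab
      have hkN : (k : ℝ) ≤ (N : ℝ) := by exact_mod_cast hk
      have hkε : (k : ℝ) * ε ≤ δ :=
        le_trans (mul_le_mul_of_nonneg_right hkN hε.le) hN1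
      have h1r : 1 - r k ≤ δ := by have := hber k; linarith
      rw [Metric.mem_ball]
      calc dist (r k • a) x ≤ dist (r k • a) (r k • x) + dist (r k • x) x :=
            dist_triangle _ _ _
        _ = r k * dist a x + dist (r k • x) x := by
            rw [dist_smul₀, Real.norm_eq_abs, abs_of_pos (hr_pos k)]
        _ = r k * dist a x + (1 - r k) * ‖x‖ := by
            have h5 : dist (r k • x) x = (1 - r k) * ‖x‖ := by
              rw [dist_eq_norm, show r k • x - x = -((1 - r k) • x) by module, norm_neg,
                norm_smul, Real.norm_eq_abs, abs_of_nonneg (by linarith [hr_le_one k])]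
            rw [h5]
        _ < 3 * δ := by
            have hrk1 := hr_le_one k
            have hrk0 := hr_pos k
            have h2 : r k * dist a x ≤ 1 * dist a x := by
              apply mul_le_mul_of_nonneg_right hrk1 dist_nonneg
            have h3 : (1 - r k) * ‖x‖ ≤ δ * (1 + δ) := by
              apply mul_le_mul h1r hx.le (norm_nonneg _) hδ.le
            nlinarith [dist_nonneg (x := a) (y := x)]
    have hdisj_lt : ∀ j k : ℕ, j < k → Disjoint (E j) (E k) := by
      intro j k hjk
      rw [Set.disjoint_left]
      intro y hyj hyk
      obtain ⟨hj1, hj2⟩ := hEshell j hyj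
      obtain ⟨hk1, hk2⟩ := hEshell k hyk
      have hmono : r k ≤ r (j + 1) := by
        apply pow_le_pow_of_le_one (by linarith) (by linarith) hjk
      linarith
    have hdisj : (↑(Finset.range (N + 1)) : Set ℕ).PairwiseDisjoint E := by
      intro j _ k _ hjk
      rcases hjk.lt_or_gt with h | h
      · exact hdisj_lt j k h
      · exact (hdisj_lt k j h).symm
    have hEvol : ∀ k, volume (E k) = ENNReal.ofReal (r k ^ d) * volume A := by
      intro k
      rw [hEdef]
      simp only
      rw [Measure.addHaar_smul volume, hfr, abs_of_pos (pow_pos (hr_pos k) d)]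
    have hsum : ∑ k ∈ Finset.range (N + 1), volume (E k)
        ≤ ENNReal.ofReal ((3 * δ) ^ d) * V := by
      rw [← measure_biUnion_finset hdisj (fun k _ => hEmeas k)]
      calc volume (⋃ k ∈ Finset.range (N + 1), E k)
          ≤ volume (Metric.ball x (3 * δ)) := by
            apply measure_mono
            apply Set.iUnion₂_subset
            intro k hk
            exact hEball k (Nat.lt_succ_iff.mp (Finset.mem_range.mp hk))
        _ = ENNReal.ofReal ((3 * δ) ^ d) * V := hball x (3 * δ) (by positivity)
    have hlower : ∀ k ∈ Finset.range (N + 1),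
        ENNReal.ofReal ((1/2 : ℝ) ^ d) * volume A ≤ volume (E k) := by
      intro k hk
      have hk' : k ≤ N := Nat.lt_succ_iff.mp (Finset.mem_range.mp hk)
      have hpow : ((1/2:ℝ)) ^ d ≤ r k ^ d := pow_le_pow_left₀ (by norm_num) (hr_half k hk') d
      rw [hEvol k]
      exact mul_le_mul_left (ENNReal.ofReal_le_ofReal hpow) _
    have hcard : ((N + 1 : ℕ) : ℝ≥0∞) * (ENNReal.ofReal ((1/2 : ℝ) ^ d) * volume A)
        ≤ ENNReal.ofReal ((3 * δ) ^ d) * V := by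
      calc ((N + 1 : ℕ) : ℝ≥0∞) * (ENNReal.ofReal ((1/2 : ℝ) ^ d) * volume A)
          = (Finset.range (N + 1)).card • (ENNReal.ofReal ((1/2 : ℝ) ^ d) * volume A) := by
            rw [Finset.card_range, nsmul_eq_mul]
        _ ≤ ∑ k ∈ Finset.range (N + 1), volume (E k) :=
            Finset.card_nsmul_le_sum _ _ _ hlower
        _ ≤ ENNReal.ofReal ((3 * δ) ^ d) * V := hsum
    set a : ℝ := (volume A).toReal with hadef
    have ha0 : 0 ≤ a := ENNReal.toReal_nonneg
    have hAeq : volume A = ENNReal.ofReal a := (ENNReal.ofReal_toReal hAfin.ne).symm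
    have hreal : ((N : ℝ) + 1) * ((1/2) ^ d * a) ≤ (3 * δ) ^ d * ω := by
      rw [← ENNReal.ofReal_le_ofReal_iff (by positivity)]
      calc ENNReal.ofReal (((N : ℝ) + 1) * ((1/2) ^ d * a))
          = ((N + 1 : ℕ) : ℝ≥0∞) * (ENNReal.ofReal ((1/2 : ℝ) ^ d) * volume A) := by
            have hcast : ((N + 1 : ℕ) : ℝ≥0∞) = ENNReal.ofReal ((N : ℝ) + 1) := by
              rw [show ((N:ℝ) + 1) = ((N + 1 : ℕ) : ℝ) by push_cast; ring,
                ENNReal.ofReal_natCast]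
            rw [hAeq, hcast, ← ENNReal.ofReal_mul (by positivity),
              ← ENNReal.ofReal_mul (by positivity)]
        _ ≤ ENNReal.ofReal ((3 * δ) ^ d) * V := hcard
        _ = ENNReal.ofReal ((3 * δ) ^ d * ω) := by
            rw [hVeq, ← ENNReal.ofReal_mul (by positivity)]
    have hNpos : (0:ℝ) < (N : ℝ) + 1 := by positivity
    have h2d : ((1:ℝ)/2) ^ d * 2 ^ d = 1 := by
      rw [← mul_pow]; norm_num
    have hstep : a * ((N : ℝ) + 1) ≤ 6 ^ d * (δ ^ d * ω) := by
      have h := mul_le_mul_of_nonneg_right hreal (by positivity : (0:ℝ) ≤ 2 ^ d)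
      have e1 : ((N : ℝ) + 1) * ((1/2) ^ d * a) * 2 ^ d = a * ((N : ℝ) + 1) := by
        calc ((N : ℝ) + 1) * ((1/2) ^ d * a) * 2 ^ d
            = a * ((N : ℝ) + 1) * ((1/2) ^ d * 2 ^ d) := by ring
          _ = a * ((N : ℝ) + 1) := by rw [h2d, mul_one]
      have e2 : (3 * δ) ^ d * ω * 2 ^ d = 6 ^ d * (δ ^ d * ω) := by
        rw [mul_pow]
        calc (3:ℝ) ^ d * δ ^ d * ω * 2 ^ d = ((3:ℝ) ^ d * 2 ^ d) * (δ ^ d * ω) := by ring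
          _ = 6 ^ d * (δ ^ d * ω) := by rw [← mul_pow]; norm_num
      rw [e1, e2] at h
      exact h
    have hfinal : a ≤ (d : ℝ) * 6 ^ d * ω * ε * δ ^ e := by
      have hchain : a * ((N : ℝ) + 1) ≤ ((d : ℝ) * 6 ^ d * ω * ε * δ ^ e) * ((N : ℝ) + 1) := by
        calc a * ((N : ℝ) + 1) ≤ 6 ^ d * (δ ^ d * ω) := hstep
          _ = (6 ^ d * ω * δ ^ e) * δ := by rw [hde, pow_succ]; ring
          _ ≤ (6 ^ d * ω * δ ^ e) * (((N : ℝ) + 1) * ε) := by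
              apply mul_le_mul_of_nonneg_left hN2.le (by positivity)
          _ = (1 * (6 ^ d * ω * ε * δ ^ e)) * ((N : ℝ) + 1) := by ring
          _ ≤ ((d : ℝ) * (6 ^ d * ω * ε * δ ^ e)) * ((N : ℝ) + 1) := by
              apply mul_le_mul_of_nonneg_right
                (mul_le_mul_of_nonneg_right hd1 (by positivity)) hNpos.le
          _ = ((d : ℝ) * 6 ^ d * ω * ε * δ ^ e) * ((N : ℝ) + 1) := by ring
      exact le_of_mul_le_mul_right hchain hNpos
    calc volume A = ENNReal.ofReal a := hAeq
      _ ≤ ENNReal.ofReal ((d : ℝ) * 6 ^ d * ω * ε * δ ^ e) :=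
          ENNReal.ofReal_le_ofReal hfinal
end

section
/- Let d ≥ 2, let D ⊂ ℝ^d be a bounded open set, let 1 < p < (d+1)/(d−1), and let η > 0. There exists a constant C = C(d, p, η, D) such that for every x ∈ D with dist(x, Dᶜ) ≥ η and every z in the topological boundary ∂D of D, ∫_D dist(y, Dᶜ)^{1+p} · |x − y|^{1−d} · |y − z|^{−dp} dy ≤ C, where the integral is with respect to d-dimensional Lebesgue measure. -/
open MeasureTheory Metric Set

lemma riesz_ball_bound (d : ℕ) (hd : 1 ≤ d) (a : ℝ) (ha : -(d:ℝ) < a) (ha' : a < 0)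
    (r : ℝ) (hr : 0 < r) :
    ∃ K : ℝ, ∀ (c : EuclideanSpace ℝ (Fin d)) (S : Set (EuclideanSpace ℝ (Fin d))),
      MeasurableSet S → S ⊆ ball c r →
      IntegrableOn (fun y => ‖c - y‖ ^ a) S volume ∧
        ∫ y in S, ‖c - y‖ ^ a ≤ K := by
  haveI : NeZero d := ⟨by omega⟩
  set E := EuclideanSpace ℝ (Fin d)
  haveI : Nontrivial E := inferInstance
  set B : ENNReal := volume (ball (0:E) 1) with hB
  have hBfin : B ≠ ⊤ := measure_ball_lt_top.ne
  set w : ℝ := (2:ℝ) ^ (-(a + (d:ℝ))) with hw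
  have hw0 : 0 < w := Real.rpow_pos_of_pos two_pos _
  have hw1 : w < 1 := by
    apply Real.rpow_lt_one_of_one_lt_of_neg one_lt_two
    linarith
  set u : ℝ := (r/2) ^ a * r ^ (d:ℕ) with hu
  have hu0 : 0 ≤ u := mul_nonneg (Real.rpow_nonneg (by positivity) _) (by positivity)
  set M : ENNReal := ENNReal.ofReal u * B * (1 - ENNReal.ofReal w)⁻¹ with hM
  have hMfin : M ≠ ⊤ := by
    apply ENNReal.mul_ne_top (ENNReal.mul_ne_top ENNReal.ofReal_ne_top hBfin)
    rw [ENNReal.inv_ne_top]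
    simp only [ne_eq, tsub_eq_zero_iff_le, not_le]
    exact ENNReal.ofReal_lt_one.2 hw1
  -- per-annulus radius identity
  have radix : ∀ n : ℕ, (r / 2 ^ (n+1)) ^ a * (r / 2 ^ n) ^ (d:ℕ) = u * w ^ n := by
    intro n
    have h2n : (0:ℝ) < 2 ^ n := by positivity
    have e1 : (r / 2 ^ (n+1) : ℝ) = (r/2) * ((2:ℝ) ^ (-(n:ℝ))) := by
      rw [Real.rpow_neg (by norm_num), Real.rpow_natCast, pow_succ, mul_comm ((2:ℝ)^n) 2,
        ← div_div, div_eq_mul_inv (r/2)]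
    have e2 : ((r/2) * ((2:ℝ) ^ (-(n:ℝ)))) ^ a
        = (r/2) ^ a * (2:ℝ) ^ (-(n:ℝ) * a) := by
      rw [Real.mul_rpow (by positivity) (Real.rpow_nonneg (by norm_num) _),
        ← Real.rpow_mul (by norm_num)]
    have e3 : (r / 2 ^ n : ℝ) ^ (d:ℕ) = r ^ (d:ℕ) * (2:ℝ) ^ (-(n:ℝ) * (d:ℝ)) := by
      rw [div_pow, ← Real.rpow_natCast ((2:ℝ) ^ n) d, ← Real.rpow_natCast (2:ℝ) n,
        ← Real.rpow_mul (by norm_num), neg_mul, Real.rpow_neg (by norm_num), div_eq_mul_inv]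
    have e4 : (2:ℝ) ^ (-(n:ℝ) * a) * (2:ℝ) ^ (-(n:ℝ) * (d:ℝ)) = w ^ n := by
      rw [← Real.rpow_add two_pos, hw, ← Real.rpow_natCast ((2:ℝ) ^ (-(a + (d:ℝ)))) n,
        ← Real.rpow_mul (by norm_num)]
      ring_nf
    rw [e1, e2, e3, hu]
    calc (r/2) ^ a * (2:ℝ) ^ (-(n:ℝ) * a) * (r ^ (d:ℕ) * (2:ℝ) ^ (-(n:ℝ) * (d:ℝ)))
        = (r/2) ^ a * r ^ (d:ℕ) * ((2:ℝ) ^ (-(n:ℝ) * a) * (2:ℝ) ^ (-(n:ℝ) * (d:ℝ))) := by ring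
      _ = (r/2) ^ a * r ^ (d:ℕ) * w ^ n := by rw [e4]
  -- coverage of the punctured ball by dyadic annuli
  have cover : ∀ c : E, ball c r ⊆
      {c} ∪ ⋃ n : ℕ, (ball c (r / 2 ^ n) \ ball c (r / 2 ^ (n+1))) := by
    intro c y hy
    rcases eq_or_ne y c with h | h
    · exact Or.inl (by simp [h])
    · have hdy : 0 < dist y c := dist_pos.2 h
      have hlt : dist y c < r := mem_ball.1 hy
      have hex : ∃ n : ℕ, r / 2 ^ (n+1) ≤ dist y c := by
        obtain ⟨m, hm⟩ := pow_unbounded_of_one_lt (r / dist y c) (one_lt_two (α := ℝ))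
        refine ⟨m, ?_⟩
        have h1 : r < 2 ^ m * dist y c := (div_lt_iff₀ hdy).1 hm
        rw [div_le_iff₀ (by positivity)]
        have h2 : (2:ℝ) ^ (m+1) = 2 * 2 ^ m := by rw [pow_succ]; ring
        nlinarith [pow_pos (zero_lt_two (α := ℝ)) m]
      refine Or.inr (mem_iUnion.2 ⟨Nat.find hex, ?_, ?_⟩)
      · rcases Nat.eq_zero_or_pos (Nat.find hex) with h0 | h0
        · rw [h0]; simpa using hlt
        · obtain ⟨k, hk⟩ := Nat.exists_eq_succ_of_ne_zero h0.ne'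
          have hmin := Nat.find_min hex (m := k) (by omega)
          push_neg at hmin
          rw [mem_ball, hk]
          exact hmin
      · intro hmem
        exact absurd (mem_ball.1 hmem) (not_lt.2 (Nat.find_spec hex))
  -- the lintegral bound
  have lint : ∀ c : E, ∫⁻ y in ball c r, ENNReal.ofReal (‖c - y‖ ^ a) ∂volume ≤ M := by
    intro c
    have hsing : volume ({c} : Set E) = 0 := measure_singleton c
    calc ∫⁻ y in ball c r, ENNReal.ofReal (‖c - y‖ ^ a) ∂volume
        ≤ ∫⁻ y in {c} ∪ ⋃ n : ℕ, (ball c (r / 2 ^ n) \ ball c (r / 2 ^ (n+1))),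
            ENNReal.ofReal (‖c - y‖ ^ a) ∂volume := lintegral_mono_set (cover c)
      _ ≤ (∫⁻ y in ({c} : Set E), ENNReal.ofReal (‖c - y‖ ^ a) ∂volume)
          + ∫⁻ y in ⋃ n : ℕ, (ball c (r / 2 ^ n) \ ball c (r / 2 ^ (n+1))),
            ENNReal.ofReal (‖c - y‖ ^ a) ∂volume := lintegral_union_le _ _ _
      _ = ∫⁻ y in ⋃ n : ℕ, (ball c (r / 2 ^ n) \ ball c (r / 2 ^ (n+1))),
            ENNReal.ofReal (‖c - y‖ ^ a) ∂volume := by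
            rw [setLIntegral_measure_zero _ _ hsing, zero_add]
      _ ≤ ∑' n : ℕ, ∫⁻ y in (ball c (r / 2 ^ n) \ ball c (r / 2 ^ (n+1))),
            ENNReal.ofReal (‖c - y‖ ^ a) ∂volume := lintegral_iUnion_le _ _
      _ ≤ ∑' n : ℕ, (ENNReal.ofReal u * B) * (ENNReal.ofReal w) ^ n := by
            refine ENNReal.tsum_le_tsum fun n => ?_
            have hrn : (0:ℝ) < r / 2 ^ (n+1) := by positivity
            have step1 : ∫⁻ y in (ball c (r / 2 ^ n) \ ball c (r / 2 ^ (n+1))),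
                ENNReal.ofReal (‖c - y‖ ^ a) ∂volume
                ≤ ∫⁻ _ in (ball c (r / 2 ^ n) \ ball c (r / 2 ^ (n+1))),
                  ENNReal.ofReal ((r / 2 ^ (n+1)) ^ a) ∂volume := by
              refine setLIntegral_mono measurable_const fun y hy => ?_
              refine ENNReal.ofReal_le_ofReal ?_
              have hge : r / 2 ^ (n+1) ≤ ‖c - y‖ := by
                have := hy.2
                rw [mem_ball, dist_comm, dist_eq_norm] at this
                exact not_lt.1 this
              exact Real.rpow_le_rpow_of_nonpos hrn hge ha'.le
            have step2 : volume (ball c (r / 2 ^ n) \ ball c (r / 2 ^ (n+1)))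
                ≤ ENNReal.ofReal ((r / 2 ^ n) ^ (d:ℕ)) * B := by
              refine le_trans (measure_mono diff_subset) ?_
              rw [Measure.addHaar_ball volume c (by positivity : (0:ℝ) ≤ r / 2 ^ n),
                finrank_euclideanSpace_fin]
            calc ∫⁻ y in (ball c (r / 2 ^ n) \ ball c (r / 2 ^ (n+1))),
                ENNReal.ofReal (‖c - y‖ ^ a) ∂volume
                ≤ ENNReal.ofReal ((r / 2 ^ (n+1)) ^ a)
                    * volume (ball c (r / 2 ^ n) \ ball c (r / 2 ^ (n+1))) := by
                  refine le_trans step1 ?_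
                  rw [setLIntegral_const]
              _ ≤ ENNReal.ofReal ((r / 2 ^ (n+1)) ^ a)
                    * (ENNReal.ofReal ((r / 2 ^ n) ^ (d:ℕ)) * B) :=
                  mul_le_mul_right step2 _
              _ = ENNReal.ofReal ((r / 2 ^ (n+1)) ^ a * (r / 2 ^ n) ^ (d:ℕ)) * B := by
                  rw [ENNReal.ofReal_mul (Real.rpow_nonneg hrn.le _), mul_assoc]
              _ = ENNReal.ofReal (u * w ^ n) * B := by rw [radix n]
              _ = (ENNReal.ofReal u * B) * (ENNReal.ofReal w) ^ n := by
                  rw [ENNReal.ofReal_mul hu0, ENNReal.ofReal_pow hw0.le]; ring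
      _ = (ENNReal.ofReal u * B) * (1 - ENNReal.ofReal w)⁻¹ := by
            rw [ENNReal.tsum_mul_left, ENNReal.tsum_geometric]
      _ = M := rfl
  refine ⟨M.toReal, fun c S hSm hSsub => ?_⟩
  have hm : Measurable fun y : E => ‖c - y‖ ^ a := by fun_prop
  have hnn : ∀ {ν : Measure E}, 0 ≤ᵐ[ν] fun y : E => ‖c - y‖ ^ a :=
    Filter.Eventually.of_forall fun y => Real.rpow_nonneg (norm_nonneg _) _
  have hint_ball : IntegrableOn (fun y => ‖c - y‖ ^ a) (ball c r) volume :=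
    ⟨hm.aestronglyMeasurable, (hasFiniteIntegral_iff_ofReal hnn).2
      (lt_of_le_of_lt (lint c) (lt_top_iff_ne_top.2 hMfin))⟩
  refine ⟨hint_ball.mono_set hSsub, ?_⟩
  calc ∫ y in S, ‖c - y‖ ^ a
      ≤ ∫ y in ball c r, ‖c - y‖ ^ a :=
        setIntegral_mono_set hint_ball hnn (Filter.Eventually.of_forall hSsub)
    _ = (∫⁻ y in ball c r, ENNReal.ofReal (‖c - y‖ ^ a) ∂volume).toReal :=
        integral_eq_lintegral_of_nonneg_ae hnn hm.aestronglyMeasurable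
    _ ≤ M.toReal := ENNReal.toReal_mono hMfin (lint c)

/-- The analytic core of estimate (3.9): for `D ⊂ ℝ^d` bounded open, `1 < p < (d+1)/(d−1)`
and `η > 0`, there is `C` such that for `x ∈ D` with `dist(x,Dᶜ) ≥ η` and `z ∈ ∂D`,
`∫_D dist(y,Dᶜ)^{1+p}·|x−y|^{1−d}·|y−z|^{−dp} dy ≤ C`. -/
theorem integral_dist_rpow_mul_rpow_le (d : ℕ) (hd : 2 ≤ d)
    (D : Set (EuclideanSpace ℝ (Fin d))) (hD : IsOpen D) (hDb : Bornology.IsBounded D)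
    (p : ℝ) (hp : 1 < p) (hp' : p < ((d : ℝ) + 1) / ((d : ℝ) - 1)) (η : ℝ) (hη : 0 < η) :
    ∃ C : ℝ, ∀ x ∈ D, η ≤ Metric.infDist x Dᶜ → ∀ z ∈ frontier D,
      ∫ y in D,
          Metric.infDist y Dᶜ ^ (1 + p) * ‖x - y‖ ^ (1 - (d : ℝ)) *
            ‖y - z‖ ^ (-((d : ℝ) * p)) ≤ C := by
  have hd2 : (2:ℝ) ≤ (d:ℝ) := by exact_mod_cast hd
  obtain ⟨R₀, hR₀⟩ := hDb.subset_ball 0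
  set R : ℝ := max R₀ 1 with hR
  have hR1 : (1:ℝ) ≤ R := le_max_right _ _
  have hDR : D ⊆ ball (0:EuclideanSpace ℝ (Fin d)) R := hR₀.trans (ball_subset_ball (le_max_left _ _))
  set r : ℝ := 2 * R + 1 with hrdef
  have hr : 0 < r := by positivity
  set a : ℝ := 1 - (d:ℝ) with hadef
  set b : ℝ := 1 + p - (d:ℝ) * p with hbdef
  have ha : -(d:ℝ) < a := by rw [hadef]; linarith
  have ha' : a < 0 := by rw [hadef]; linarith
  have hpd : p * ((d:ℝ) - 1) < (d:ℝ) + 1 := by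
    rw [lt_div_iff₀ (by linarith : (0:ℝ) < (d:ℝ) - 1)] at hp'
    linarith
  have hb : -(d:ℝ) < b := by rw [hbdef]; nlinarith
  have hb' : b < 0 := by rw [hbdef]; nlinarith
  obtain ⟨Ka, hKa⟩ := riesz_ball_bound d (by omega) a ha ha' r hr
  obtain ⟨Kb, hKb⟩ := riesz_ball_bound d (by omega) b hb hb' r hr
  refine ⟨(η/2)^b * Ka + (η/2)^a * Kb, fun x hx hxd z hz => ?_⟩
  have hzc : z ∈ Dᶜ := (hD.frontier_eq ▸ hz).2
  have hDsub : ∀ c ∈ closedBall (0:EuclideanSpace ℝ (Fin d)) R, D ⊆ ball c r := by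
    intro c hc y hy
    have h1 : ‖y‖ < R := by simpa [mem_ball, dist_eq_norm] using hDR hy
    have h2 : ‖c‖ ≤ R := by simpa [mem_closedBall, dist_eq_norm] using hc
    have h3 : dist y c ≤ ‖y‖ + ‖c‖ := by
      rw [dist_eq_norm]; exact norm_sub_le _ _
    rw [mem_ball]
    calc dist y c ≤ ‖y‖ + ‖c‖ := h3
      _ < r := by rw [hrdef]; linarith
  have hxball : x ∈ closedBall (0:EuclideanSpace ℝ (Fin d)) R := ball_subset_closedBall (hDR hx)
  have hzball : z ∈ closedBall (0:EuclideanSpace ℝ (Fin d)) R := by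
    have h1 : z ∈ closure D := frontier_subset_closure hz
    have h2 : closure D ⊆ closedBall (0:EuclideanSpace ℝ (Fin d)) R :=
      closure_minimal (hDR.trans ball_subset_closedBall) isClosed_closedBall
    exact h2 h1
  obtain ⟨hIa, hIaB⟩ := hKa x D hD.measurableSet (hDsub x hxball)
  obtain ⟨hIb0, hIbB0⟩ := hKb z D hD.measurableSet (hDsub z hzball)
  have hfun : (fun y : EuclideanSpace ℝ (Fin d) => ‖z - y‖ ^ b) = fun y : EuclideanSpace ℝ (Fin d) => ‖y - z‖ ^ b :=
    funext fun y => by rw [norm_sub_rev]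
  rw [hfun] at hIb0 hIbB0
  set f : EuclideanSpace ℝ (Fin d) → ℝ := fun y =>
    Metric.infDist y Dᶜ ^ (1 + p) * ‖x - y‖ ^ (1 - (d:ℝ)) * ‖y - z‖ ^ (-((d:ℝ) * p)) with hf
  set g : EuclideanSpace ℝ (Fin d) → ℝ := fun y => (η/2)^b * ‖x - y‖ ^ a + (η/2)^a * ‖y - z‖ ^ b with hg
  have hgint : IntegrableOn g D volume := (hIa.const_mul _).add (hIb0.const_mul _)
  have hη2 : (0:ℝ) < η / 2 := by linarith
  have hpt : ∀ y ∈ D, f y ≤ g y := by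
    intro y hy
    have hyz : y ≠ z := fun h => hzc (h ▸ hy)
    have hNyz : 0 < ‖y - z‖ := by
      rw [norm_pos_iff]; exact sub_ne_zero.2 hyz
    have hI0 : 0 ≤ Metric.infDist y Dᶜ := Metric.infDist_nonneg
    have hIle : Metric.infDist y Dᶜ ≤ ‖y - z‖ := by
      have := Metric.infDist_le_dist_of_mem (x := y) hzc
      rwa [dist_eq_norm] at this
    have h1 : Metric.infDist y Dᶜ ^ (1 + p) ≤ ‖y - z‖ ^ (1 + p) :=
      Real.rpow_le_rpow hI0 hIle (by linarith)
    have hNxy : (0:ℝ) ≤ ‖x - y‖ ^ a := Real.rpow_nonneg (norm_nonneg _) _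
    have hcomb : ‖y - z‖ ^ (1 + p) * ‖y - z‖ ^ (-((d:ℝ) * p)) = ‖y - z‖ ^ b := by
      rw [← Real.rpow_add hNyz]
      rw [hbdef]; ring_nf
    have hkey : f y ≤ ‖x - y‖ ^ a * ‖y - z‖ ^ b := by
      have : f y ≤ ‖y - z‖ ^ (1 + p) * ‖x - y‖ ^ a * ‖y - z‖ ^ (-((d:ℝ) * p)) := by
        rw [hf]
        have := mul_le_mul_of_nonneg_right h1 hNxy
        exact mul_le_mul_of_nonneg_right this (Real.rpow_nonneg (norm_nonneg _) _)
      calc f y ≤ ‖y - z‖ ^ (1 + p) * ‖x - y‖ ^ a * ‖y - z‖ ^ (-((d:ℝ) * p)) := this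
        _ = ‖x - y‖ ^ a * (‖y - z‖ ^ (1 + p) * ‖y - z‖ ^ (-((d:ℝ) * p))) := by ring
        _ = ‖x - y‖ ^ a * ‖y - z‖ ^ b := by rw [hcomb]
    have hηxz : η ≤ ‖x - z‖ := by
      have := Metric.infDist_le_dist_of_mem (x := x) hzc
      rw [dist_eq_norm] at this
      linarith [hxd.trans this]
    have htri : ‖x - z‖ ≤ ‖x - y‖ + ‖y - z‖ := by
      have := dist_triangle x y z
      simpa [dist_eq_norm] using this
    have hgy1 : (0:ℝ) ≤ (η/2)^b * ‖x - y‖ ^ a :=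
      mul_nonneg (Real.rpow_nonneg hη2.le _) hNxy
    have hgy2 : (0:ℝ) ≤ (η/2)^a * ‖y - z‖ ^ b :=
      mul_nonneg (Real.rpow_nonneg hη2.le _) (Real.rpow_nonneg (norm_nonneg _) _)
    rcases le_total ‖x - y‖ ‖y - z‖ with hc | hc
    · have hhalf : η / 2 ≤ ‖y - z‖ := by linarith
      have : ‖y - z‖ ^ b ≤ (η/2) ^ b := Real.rpow_le_rpow_of_nonpos hη2 hhalf hb'.le
      have h2 : ‖x - y‖ ^ a * ‖y - z‖ ^ b ≤ (η/2)^b * ‖x - y‖ ^ a := by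
        rw [mul_comm ((η/2)^b)]
        exact mul_le_mul_of_nonneg_left this hNxy
      calc f y ≤ ‖x - y‖ ^ a * ‖y - z‖ ^ b := hkey
        _ ≤ (η/2)^b * ‖x - y‖ ^ a := h2
        _ ≤ g y := le_add_of_nonneg_right hgy2
    · have hhalf : η / 2 ≤ ‖x - y‖ := by linarith
      have : ‖x - y‖ ^ a ≤ (η/2) ^ a := Real.rpow_le_rpow_of_nonpos hη2 hhalf ha'.le
      have h2 : ‖x - y‖ ^ a * ‖y - z‖ ^ b ≤ (η/2)^a * ‖y - z‖ ^ b :=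
        mul_le_mul_of_nonneg_right this (Real.rpow_nonneg (norm_nonneg _) _)
      calc f y ≤ ‖x - y‖ ^ a * ‖y - z‖ ^ b := hkey
        _ ≤ (η/2)^a * ‖y - z‖ ^ b := h2
        _ ≤ g y := le_add_of_nonneg_left hgy1
  have hfnn : 0 ≤ᵐ[volume.restrict D] f :=
    Filter.Eventually.of_forall fun y =>
      mul_nonneg (mul_nonneg (Real.rpow_nonneg Metric.infDist_nonneg _)
        (Real.rpow_nonneg (norm_nonneg _) _)) (Real.rpow_nonneg (norm_nonneg _) _)
  have hmono : ∫ y in D, f y ≤ ∫ y in D, g y :=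
    integral_mono_of_nonneg hfnn hgint
      ((ae_restrict_iff' hD.measurableSet).2 (Filter.Eventually.of_forall hpt))
  have hsplit : ∫ y in D, g y
      = (η/2)^b * (∫ y in D, ‖x - y‖ ^ a) + (η/2)^a * (∫ y in D, ‖y - z‖ ^ b) := by
    rw [hg]
    rw [integral_add (hIa.const_mul _) (hIb0.const_mul _), integral_const_mul,
      integral_const_mul]
  calc ∫ y in D, f y ≤ ∫ y in D, g y := hmono
    _ = (η/2)^b * (∫ y in D, ‖x - y‖ ^ a) + (η/2)^a * (∫ y in D, ‖y - z‖ ^ b) := hsplit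
    _ ≤ (η/2)^b * Ka + (η/2)^a * Kb :=
        add_le_add (mul_le_mul_of_nonneg_left hIaB (Real.rpow_nonneg hη2.le _))
          (mul_le_mul_of_nonneg_left hIbB0 (Real.rpow_nonneg hη2.le _))
end
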